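/- arXiv:2508.17698 — 10 statements merged into one kernel-verified Lean document; each statement's English description precedes it below -/
import Mathlib

section
/- Let λ₁, λ₂, μ₁, μ₂ ∈ 𝔻. The 2×2 matrix M_Φ(λ₁,λ₂;μ₁,μ₂) with (i,j)-entry (1−μ_i·conj(μ_j))²/(1−λ_i·conj(λ_j))² is positive semi-definite if and only if ρ(μ₁,μ₂) ≤ ρ(λ₁,λ₂). -/
open Complex ComplexConjugate ComplexOrder

/-- The distance on the unit disk induced by the Bergman kernel:
`ρ(λ,μ) = sqrt(2p² − p⁴)` where `p = |(λ−μ)/(1−conj(μ)·λ)|`. -/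
noncomputable def rho (l m : ℂ) : ℝ :=
  Real.sqrt (2 * ‖(l - m) / (1 - conj m * l)‖ ^ 2
    - ‖(l - m) / (1 - conj m * l)‖ ^ 4)

open Matrix
lemma disk_id (u v : ℂ) : Complex.normSq (1 - conj v * u) - Complex.normSq (u - v)
    = (1 - Complex.normSq u) * (1 - Complex.normSq v) := by
  simp [Complex.normSq_apply, Complex.mul_re, Complex.mul_im, Complex.sub_re, Complex.sub_im]
  ring

lemma one_sub_ne (u v : ℂ) (hu : ‖u‖ < 1) (hv : ‖v‖ < 1) :
    1 - conj v * u ≠ 0 := by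
  intro h
  have h1 : conj v * u = 1 := by linear_combination -h
  have h2 := congrArg (‖·‖) h1
  rw [norm_mul, norm_one, Complex.norm_conj] at h2
  nlinarith [norm_nonneg u, norm_nonneg v]

lemma normSq_lt_one (u : ℂ) (hu : ‖u‖ < 1) : Complex.normSq u < 1 := by
  rw [← Complex.sq_norm]
  nlinarith [norm_nonneg u]

lemma rho_eq (u v : ℂ) (hu : ‖u‖ < 1) (hv : ‖v‖ < 1) :
    rho u v = Real.sqrt (1 - ((1 - Complex.normSq u) * (1 - Complex.normSq v) /
      Complex.normSq (1 - conj v * u)) ^ 2) := by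
  have hN : (0:ℝ) < Complex.normSq (1 - conj v * u) :=
    Complex.normSq_pos.mpr (one_sub_ne u v hu hv)
  have hp : ‖(u - v) / (1 - conj v * u)‖ ^ 2
      = 1 - (1 - Complex.normSq u) * (1 - Complex.normSq v) /
          Complex.normSq (1 - conj v * u) := by
    rw [norm_div, div_pow, Complex.sq_norm, Complex.sq_norm]
    rw [eq_sub_iff_add_eq, ← add_div, div_eq_one_iff_eq hN.ne']
    linarith [disk_id u v]
  unfold rho
  rw [show (4:ℕ) = 2*2 by rfl, pow_mul, hp]
  ring_nf

lemma psd_two_iff (a d : ℝ) (b : ℂ) (ha : 0 < a) :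
    (Matrix.of ![![(a:ℂ), b], ![conj b, (d:ℂ)]]).PosSemidef ↔ Complex.normSq b ≤ a * d := by
  have ha' : (a:ℂ) ≠ 0 := by exact_mod_cast ha.ne'
  constructor
  · intro h
    have h2 := h.dotProduct_mulVec_nonneg ![-b, (a:ℂ)]
    have key : star ![-b, (a:ℂ)] ⬝ᵥ
        ((Matrix.of ![![(a:ℂ), b], ![conj b, (d:ℂ)]]) *ᵥ ![-b, (a:ℂ)])
        = ((a * (a * d - Complex.normSq b) : ℝ) : ℂ) := by
      simp [dotProduct, Matrix.mulVec, Fin.sum_univ_two]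
      rw [← Complex.mul_conj]
      push_cast
      ring
    rw [key, Complex.zero_le_real] at h2
    nlinarith
  · intro hle
    rw [Matrix.posSemidef_iff_dotProduct_mulVec]
    constructor
    · unfold Matrix.IsHermitian
      ext i j
      fin_cases i <;> fin_cases j <;>
        simp [Matrix.conjTranspose_apply, Complex.conj_ofReal]
    · intro x
      have key : star x ⬝ᵥ ((Matrix.of ![![(a:ℂ), b], ![conj b, (d:ℂ)]]) *ᵥ x)
          = (((Complex.normSq ((a:ℂ) * x 0 + b * x 1)
              + (a * d - Complex.normSq b) * Complex.normSq (x 1)) / a : ℝ) : ℂ) := by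
        push_cast
        rw [eq_div_iff ha', ← Complex.mul_conj, ← Complex.mul_conj]
        simp [dotProduct, Matrix.mulVec, Fin.sum_univ_two, map_add, _root_.map_mul,
          Complex.conj_ofReal]
        linear_combination ((a:ℂ)*(d:ℂ) - b*conj b) * (Complex.mul_conj (x 1))
      rw [key, Complex.zero_le_real]
      have h1 : 0 ≤ Complex.normSq ((a:ℂ) * x 0 + b * x 1) := Complex.normSq_nonneg _
      have h2 : 0 ≤ Complex.normSq (x 1) := Complex.normSq_nonneg _
      have : 0 ≤ a * d - Complex.normSq b := by linarith
      positivity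


/-- `M_Φ(λ₁,λ₂;μ₁,μ₂)` is positive semi-definite iff `ρ(μ₁,μ₂) ≤ ρ(λ₁,λ₂)`. -/
theorem MPhi_posSemidef_iff_rho_le (l1 l2 m1 m2 : ℂ)
    (hl1 : ‖l1‖ < 1) (hl2 : ‖l2‖ < 1)
    (hm1 : ‖m1‖ < 1) (hm2 : ‖m2‖ < 1) :
    (Matrix.of fun i j : Fin 2 =>
        (1 - ![m1, m2] i * conj (![m1, m2] j)) ^ 2 /
          (1 - ![l1, l2] i * conj (![l1, l2] j)) ^ 2).PosSemidef
      ↔ rho m1 m2 ≤ rho l1 l2 := by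
  have hnl1 := normSq_lt_one l1 hl1
  have hnl2 := normSq_lt_one l2 hl2
  have hnm1 := normSq_lt_one m1 hm1
  have hnm2 := normSq_lt_one m2 hm2
  have hnl1' := Complex.normSq_nonneg l1
  have hnl2' := Complex.normSq_nonneg l2
  have hnm1' := Complex.normSq_nonneg m1
  have hnm2' := Complex.normSq_nonneg m2
  have hNl0 : 0 < Complex.normSq (1 - conj l2 * l1) :=
    Complex.normSq_pos.mpr (one_sub_ne l1 l2 hl1 hl2)
  have hNm0 : 0 < Complex.normSq (1 - conj m2 * m1) :=
    Complex.normSq_pos.mpr (one_sub_ne m1 m2 hm1 hm2)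
  set Nl := Complex.normSq (1 - conj l2 * l1) with hNl
  set Nm := Complex.normSq (1 - conj m2 * m1) with hNm
  have hDl0 : 0 < (1 - Complex.normSq l1) * (1 - Complex.normSq l2) := by nlinarith
  have hDm0 : 0 < (1 - Complex.normSq m1) * (1 - Complex.normSq m2) := by nlinarith
  set Dl := (1 - Complex.normSq l1) * (1 - Complex.normSq l2) with hDl
  set Dm := (1 - Complex.normSq m1) * (1 - Complex.normSq m2) with hDm
  have hDlNl : Dl ≤ Nl := by
    have := disk_id l1 l2
    have := Complex.normSq_nonneg (l1 - l2)
    rw [hDl, hNl]; linarith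
  have hDmNm : Dm ≤ Nm := by
    have := disk_id m1 m2
    have := Complex.normSq_nonneg (m1 - m2)
    rw [hDm, hNm]; linarith
  have ha : (0:ℝ) < (1 - Complex.normSq m1)^2 / (1 - Complex.normSq l1)^2 :=
    div_pos (pow_pos (by linarith) 2) (pow_pos (by linarith) 2)
  have hM : (Matrix.of fun i j : Fin 2 =>
        (1 - ![m1, m2] i * conj (![m1, m2] j)) ^ 2 /
          (1 - ![l1, l2] i * conj (![l1, l2] j)) ^ 2)
      = Matrix.of ![![((((1 - Complex.normSq m1)^2 / (1 - Complex.normSq l1)^2 : ℝ)):ℂ),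
            (1 - m1 * conj m2)^2 / (1 - l1 * conj l2)^2],
          ![conj ((1 - m1 * conj m2)^2 / (1 - l1 * conj l2)^2),
            (((1 - Complex.normSq m2)^2 / (1 - Complex.normSq l2)^2 : ℝ):ℂ)]] := by
    ext i j
    fin_cases i <;> fin_cases j <;>
      simp only [Matrix.of_apply, Matrix.cons_val_zero, Matrix.cons_val_one,
        Matrix.head_cons, Fin.isValue, Fin.mk_zero, Fin.mk_one, Matrix.vecHead,
        Matrix.vecTail] <;>
      first
        | (rw [Complex.mul_conj, Complex.mul_conj]; push_cast; ring)
        | (simp only [map_div₀, map_pow, map_sub, _root_.map_one, _root_.map_mul, conj_conj]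
           ring)
  rw [hM, psd_two_iff _ _ _ ha, rho_eq m1 m2 hm1 hm2, rho_eq l1 l2 hl1 hl2]
  have hb : Complex.normSq ((1 - m1 * conj m2)^2 / (1 - l1 * conj l2)^2) = Nm^2 / Nl^2 := by
    rw [map_div₀, map_pow, map_pow, hNm, hNl, mul_comm m1, mul_comm l1]
  have had : (1 - Complex.normSq m1)^2 / (1 - Complex.normSq l1)^2 *
      ((1 - Complex.normSq m2)^2 / (1 - Complex.normSq l2)^2) = Dm^2 / Dl^2 := by
    rw [hDm, hDl, div_mul_div_comm, ← mul_pow, ← mul_pow]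
  rw [hb, had, ← hNm, ← hNl]
  constructor
  · intro h
    apply Real.sqrt_le_sqrt
    have h' : Nm^2 * Dl^2 ≤ Dm^2 * Nl^2 := by
      rw [div_le_div_iff₀ (by positivity) (by positivity)] at h
      linarith
    have key : Dl * Nm ≤ Dm * Nl := by
      have h2 : (Dl*Nm)^2 ≤ (Dm*Nl)^2 := by
        calc (Dl*Nm)^2 = Nm^2 * Dl^2 := by ring
          _ ≤ Dm^2 * Nl^2 := h'
          _ = (Dm*Nl)^2 := by ring
      exact (pow_le_pow_iff_left₀ (by positivity) (by positivity) two_ne_zero).mp h2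
    have hq : Dl/Nl ≤ Dm/Nm := (div_le_div_iff₀ hNl0 hNm0).mpr (by linarith)
    have hq1 : (0:ℝ) ≤ Dl/Nl := by positivity
    have := pow_le_pow_left₀ hq1 hq 2
    linarith
  · intro h
    have hql1 : Dl/Nl ≤ 1 := (div_le_one hNl0).mpr hDlNl
    have hql0 : (0:ℝ) ≤ Dl/Nl := by positivity
    have hqm0 : (0:ℝ) ≤ Dm/Nm := by positivity
    have hpow : (Dl/Nl)^2 ≤ 1 := pow_le_one₀ hql0 hql1
    have h2 : 1 - (Dm/Nm)^2 ≤ 1 - (Dl/Nl)^2 := by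
      rwa [Real.sqrt_le_sqrt_iff (by linarith)] at h
    have hsq : (Dl/Nl)^2 ≤ (Dm/Nm)^2 := by linarith
    have hq : Dl/Nl ≤ Dm/Nm :=
      (pow_le_pow_iff_left₀ hql0 hqm0 two_ne_zero).mp hsq
    have key : Dl * Nm ≤ Dm * Nl := by
      rw [div_le_div_iff₀ hNl0 hNm0] at hq; linarith
    rw [div_le_div_iff₀ (by positivity) (by positivity)]
    calc Nm^2 * Dl^2 = (Dl*Nm)^2 := by ring
      _ ≤ (Dm*Nl)^2 := pow_le_pow_left₀ (by positivity) key 2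
      _ = Dm^2 * Nl^2 := by ring
end

section
/- Let f be holomorphic on 𝔻. The kernel (z,λ) ↦ (1−f(z)·conj(f(λ)))²/(1−z·conj(λ))² is positive semi-definite on 𝔻×𝔻 if and only if either sup_{λ∈𝔻}|f(λ)| ≤ 1 or inf_{λ∈𝔻}|f(λ)| ≥ 1. In other words, 𝒮_B = 𝒮 ∪ 𝒮^{−1}. -/
open Complex ComplexConjugate ComplexOrder Metric MeasureTheory intervalIntegral Matrix Kronecker

lemma intervalIntegral_conj {f : ℝ → ℂ} {a b : ℝ} :
    ∫ x in a..b, conj (f x) = conj (∫ x in a..b, f x) := by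
  simp [intervalIntegral, ← integral_conj]

noncomputable def eC (θ : ℝ) : ℂ := Complex.exp (θ * Complex.I)
noncomputable def Kk (w : ℂ) (θ : ℝ) : ℂ := eC θ / (eC θ - w)

lemma eC_abs (θ : ℝ) : ‖eC θ‖ = 1 := by
  simp [eC, Complex.norm_exp]

lemma eC_ne (θ : ℝ) : eC θ ≠ 0 := Complex.exp_ne_zero _

lemma eC_mem (θ : ℝ) : eC θ ∈ closure (ball (0:ℂ) 1) := by
  rw [closure_ball (0:ℂ) one_ne_zero]
  simp [mem_closedBall, Complex.dist_eq, eC_abs]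

lemma conj_eC (θ : ℝ) : conj (eC θ) = (eC θ)⁻¹ := by
  rw [Complex.inv_def]
  simp [Complex.normSq_eq_norm_sq, eC_abs]

lemma eC_sub_ne {w : ℂ} (hw : ‖w‖ < 1) (θ : ℝ) : eC θ - w ≠ 0 := by
  intro h
  have : ‖eC θ‖ = ‖w‖ := by rw [sub_eq_zero] at h; rw [h]
  rw [eC_abs] at this; linarith

lemma one_sub_mul_eC_ne {w : ℂ} (hw : ‖w‖ < 1) (θ : ℝ) : 1 - conj w * eC θ ≠ 0 := by
  intro h
  have h1 : ‖conj w * eC θ‖ = ‖w‖ := by simp [_root_.map_mul, eC_abs]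
  have : (1:ℂ) = conj w * eC θ := by linear_combination h
  rw [← this] at h1; simp at h1; linarith

lemma one_sub_mul_ne {a b : ℂ} (ha : ‖a‖ < 1) (hb : ‖b‖ ≤ 1) :
    1 - a * b ≠ 0 := by
  intro h
  have : (1:ℂ) = a * b := by linear_combination h
  have h1 : ‖a * b‖ = 1 := by rw [← this]; simp
  rw [norm_mul] at h1
  nlinarith [norm_nonneg a, norm_nonneg b]

-- key Cauchy integral
lemma key_integral (g : ℂ → ℂ) (hg : DiffContOnCl ℂ g (ball 0 1))
    (a b : ℂ) (ha : ‖a‖ < 1) (hb : ‖b‖ < 1) :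
    (∫ θ in (0:ℝ)..(2*Real.pi), conj (Kk a θ) * g (eC θ) * Kk b θ)
      = 2 * Real.pi * (g b / (1 - conj a * b)) := by
  have hden : ∀ z ∈ closure (ball (0:ℂ) 1), 1 - conj a * z ≠ 0 := by
    intro z hz
    rw [closure_ball (0:ℂ) one_ne_zero, mem_closedBall, Complex.dist_eq, sub_zero] at hz
    exact one_sub_mul_ne (by simpa using ha) hz
  set h : ℂ → ℂ := fun z => g z / (1 - conj a * z) with hh
  have hdc : DiffContOnCl ℂ h (ball 0 1) := by
    constructor
    · apply hg.differentiableOn.div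
      · exact (differentiable_const _).differentiableOn.sub
          ((differentiable_id.const_mul _).differentiableOn)
      · exact fun z hz => hden z (subset_closure hz)
    · apply hg.continuousOn.div
      · exact Continuous.continuousOn (by continuity)
      · exact hden
  have hcirc : (∮ z in C(0,1), (z - b)⁻¹ • h z) = (2 * Real.pi * Complex.I) • h b :=
    hdc.circleIntegral_sub_inv_smul (by simpa [mem_ball, Complex.dist_eq] using hb)
  have hpt : ∀ θ : ℝ, conj (Kk a θ) * g (eC θ) * Kk b θ
      = Complex.I⁻¹ * ((eC θ * Complex.I) * ((eC θ - b)⁻¹ * h (eC θ))) := by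
    intro θ
    have hz := eC_ne θ
    have hzb := eC_sub_ne hb θ
    have hza : 1 - conj a * eC θ ≠ 0 := hden _ (eC_mem θ)
    have hza' : (eC θ)⁻¹ - conj a ≠ 0 := by
      have : (eC θ)⁻¹ - conj a = (eC θ)⁻¹ * (1 - conj a * eC θ) := by
        field_simp
      rw [this]
      exact mul_ne_zero (inv_ne_zero hz) hza
    simp only [Kk, hh, map_div₀, map_sub, conj_eC]
    have e1 : (eC θ)⁻¹ / ((eC θ)⁻¹ - conj a) = 1 / (1 - conj a * eC θ) := by
      rw [div_eq_div_iff hza' hza]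
      field_simp
    have e2 : ∀ X : ℂ, Complex.I⁻¹ * (eC θ * Complex.I * X) = eC θ * X := by
      intro X
      field_simp
    rw [e1, e2]
    field_simp
  simp_rw [hpt]
  rw [intervalIntegral.integral_const_mul]
  have hcirc' : (∫ θ in (0:ℝ)..(2*Real.pi), (eC θ * Complex.I) * ((eC θ - b)⁻¹ * h (eC θ)))
      = (2 * Real.pi * Complex.I) * h b := by
    have := hcirc
    simp only [circleIntegral, deriv_circleMap, circleMap, zero_add, one_mul, smul_eq_mul,
      Complex.ofReal_one, Complex.ofReal_zero] at this
    simp only [eC]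
    exact this
  rw [hcirc', Complex.inv_I]
  simp only [hh]
  linear_combination (-(2 * (Real.pi:ℂ) * (g b / (1 - conj a * b)))) * Complex.I_sq

lemma cont_eC : Continuous eC := by
  exact Complex.continuous_exp.comp (by continuity)

lemma cont_Kk {w : ℂ} (hw : ‖w‖ < 1) : Continuous (Kk w) := by
  apply cont_eC.div (cont_eC.sub continuous_const)
  exact eC_sub_ne hw

lemma cont_geC {g : ℂ → ℂ} (hg : ContinuousOn g (closure (ball (0:ℂ) 1))) :
    Continuous fun θ => g (eC θ) :=
  hg.comp_continuous cont_eC eC_mem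

lemma pair_integral (g : ℂ → ℂ) (hg : DiffContOnCl ℂ g (ball 0 1))
    {n : ℕ} (w : Fin n → ℂ) (hw : ∀ i, ‖w i‖ < 1) (c d : Fin n → ℂ) :
    (∫ θ in (0:ℝ)..(2*Real.pi),
        (∑ i, c i * Kk (w i) θ) * conj (g (eC θ) * ∑ j, d j * Kk (w j) θ))
      = 2 * Real.pi * ∑ i, ∑ j, c i * conj (d j) *
          (conj (g (w j)) / (1 - w i * conj (w j))) := by
  have hgc : Continuous fun θ => g (eC θ) := cont_geC hg.continuousOn
  have hterm : ∀ (i j : Fin n), Continuous fun θ =>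
      c i * conj (d j) * (Kk (w i) θ * conj (g (eC θ)) * conj (Kk (w j) θ)) := by
    intro i j
    apply continuous_const.mul
    exact ((cont_Kk (hw i)).mul (Complex.continuous_conj.comp hgc)).mul
      (Complex.continuous_conj.comp (cont_Kk (hw j)))
  have hpt : ∀ θ : ℝ, (∑ i, c i * Kk (w i) θ) * conj (g (eC θ) * ∑ j, d j * Kk (w j) θ)
      = ∑ i, ∑ j, c i * conj (d j) * (Kk (w i) θ * conj (g (eC θ)) * conj (Kk (w j) θ)) := by
    intro θ
    rw [_root_.map_mul, map_sum, Finset.mul_sum, Finset.sum_mul_sum]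
    refine Finset.sum_congr rfl fun i _ => Finset.sum_congr rfl fun j _ => ?_
    rw [_root_.map_mul]
    ring
  simp_rw [hpt]
  rw [intervalIntegral.integral_finset_sum
    (fun i _ => ((continuous_finset_sum _ fun j _ => hterm i j).intervalIntegrable _ _))]
  rw [Finset.mul_sum]
  refine Finset.sum_congr rfl fun i _ => ?_
  rw [intervalIntegral.integral_finset_sum (fun j _ => (hterm i j).intervalIntegrable _ _),
    Finset.mul_sum]
  refine Finset.sum_congr rfl fun j _ => ?_
  rw [intervalIntegral.integral_const_mul]
  have key := key_integral g hg (w i) (w j) (hw i) (hw j)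
  have hconj : (∫ θ in (0:ℝ)..(2*Real.pi), Kk (w i) θ * conj (g (eC θ)) * conj (Kk (w j) θ))
      = 2 * Real.pi * (conj (g (w j)) / (1 - w i * conj (w j))) := by
    have h1 : (fun θ : ℝ => Kk (w i) θ * conj (g (eC θ)) * conj (Kk (w j) θ))
        = fun θ => conj (conj (Kk (w i) θ) * g (eC θ) * Kk (w j) θ) := by
      funext θ; simp [_root_.map_mul]
    rw [h1, _root_.intervalIntegral_conj, key]
    simp [_root_.map_mul, map_div₀, map_sub, _root_.map_one, map_ofNat]
  rw [hconj]
  ring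

lemma pick_psd (g : ℂ → ℂ) (hg : DiffContOnCl ℂ g (ball 0 1))
    (hb : ∀ z : ℂ, ‖z‖ ≤ 1 → ‖g z‖ ≤ 1)
    {n : ℕ} (w : Fin n → ℂ) (hw : ∀ i, ‖w i‖ < 1) (x : Fin n → ℂ) :
    0 ≤ ∑ i, ∑ j, conj (x i) * x j *
      ((1 - g (w i) * conj (g (w j))) / (1 - w i * conj (w j))) := by
  classical
  have pipos : (0:ℝ) < 2 * Real.pi := by positivity
  set c : Fin n → ℂ := fun i => conj (x i) with hc
  set cg : Fin n → ℂ := fun i => c i * g (w i) with hcg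
  set S : ℝ → ℂ := fun θ => ∑ i, c i * Kk (w i) θ with hSdef
  set V : ℝ → ℂ := fun θ => ∑ i, cg i * Kk (w i) θ with hVdef
  have hone : DiffContOnCl ℂ (fun _ : ℂ => (1:ℂ)) (ball 0 1) :=
    ⟨differentiableOn_const _, continuousOn_const⟩
  have hScont : Continuous S := continuous_finset_sum _ fun i _ =>
    continuous_const.mul (cont_Kk (hw i))
  have hVcont : Continuous V := continuous_finset_sum _ fun i _ =>
    continuous_const.mul (cont_Kk (hw i))
  have hgc : Continuous fun θ => g (eC θ) := cont_geC hg.continuousOn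
  set A' : ℂ := ∑ i, ∑ j, c i * conj (c j) * ((1:ℂ) / (1 - w i * conj (w j))) with hA'def
  set B' : ℂ := ∑ i, ∑ j, cg i * conj (cg j) * ((1:ℂ) / (1 - w i * conj (w j))) with hB'def
  set a' : ℝ := ∫ θ in (0:ℝ)..(2*Real.pi), Complex.normSq (S θ) with ha'def
  set b' : ℝ := ∫ θ in (0:ℝ)..(2*Real.pi), Complex.normSq (V θ) with hb'def
  set m' : ℝ := ∫ θ in (0:ℝ)..(2*Real.pi), Complex.normSq (g (eC θ) * S θ) with hm'def
  set n' : ℝ := ∫ θ in (0:ℝ)..(2*Real.pi),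
    Complex.normSq (V θ - g (eC θ) * S θ) with hn'def
  -- identity for a'
  have pairA := pair_integral (fun _ => (1:ℂ)) hone w hw c c
  have hA : (a' : ℂ) = 2 * Real.pi * A' := by
    rw [ha'def, ← intervalIntegral.integral_ofReal]
    have : ∀ θ : ℝ, ((Complex.normSq (S θ) : ℝ) : ℂ)
        = S θ * conj ((fun _ : ℂ => (1:ℂ)) (eC θ) * S θ) := by
      intro θ; rw [one_mul, Complex.mul_conj]
    simp_rw [this]
    rw [pairA, hA'def]
    congr 1
    refine Finset.sum_congr rfl fun i _ => Finset.sum_congr rfl fun j _ => ?_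
    simp
  have pairB := pair_integral (fun _ => (1:ℂ)) hone w hw cg cg
  have hB : (b' : ℂ) = 2 * Real.pi * B' := by
    rw [hb'def, ← intervalIntegral.integral_ofReal]
    have : ∀ θ : ℝ, ((Complex.normSq (V θ) : ℝ) : ℂ)
        = V θ * conj ((fun _ : ℂ => (1:ℂ)) (eC θ) * V θ) := by
      intro θ; rw [one_mul, Complex.mul_conj]
    simp_rw [this]
    rw [pairB, hB'def]
    congr 1
    refine Finset.sum_congr rfl fun i _ => Finset.sum_congr rfl fun j _ => ?_
    simp
  have pairVS := pair_integral g hg w hw cg c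
  have hVS : (∫ θ in (0:ℝ)..(2*Real.pi), V θ * conj (g (eC θ) * S θ))
      = 2 * Real.pi * B' := by
    rw [pairVS, hB'def]
    congr 1
    refine Finset.sum_congr rfl fun i _ => Finset.sum_congr rfl fun j _ => ?_
    simp only [hcg, _root_.map_mul]
    ring
  -- expansion of n'
  have hint1 : IntervalIntegrable (fun θ => V θ * conj (V θ)) volume 0 (2*Real.pi) :=
    (hVcont.mul (Complex.continuous_conj.comp hVcont)).intervalIntegrable _ _
  have hint2 : IntervalIntegrable (fun θ => V θ * conj (g (eC θ) * S θ)) volume 0 (2*Real.pi) :=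
    (hVcont.mul (Complex.continuous_conj.comp (hgc.mul hScont))).intervalIntegrable _ _
  have hint3 : IntervalIntegrable (fun θ => (g (eC θ) * S θ) * conj (V θ)) volume 0 (2*Real.pi) :=
    ((hgc.mul hScont).mul (Complex.continuous_conj.comp hVcont)).intervalIntegrable _ _
  have hint4 : IntervalIntegrable (fun θ => (g (eC θ) * S θ) * conj (g (eC θ) * S θ))
      volume 0 (2*Real.pi) :=
    ((hgc.mul hScont).mul (Complex.continuous_conj.comp (hgc.mul hScont))).intervalIntegrable _ _
  have hmC : (m' : ℂ) = ∫ θ in (0:ℝ)..(2*Real.pi), (g (eC θ) * S θ) * conj (g (eC θ) * S θ) := by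
    rw [hm'def, ← intervalIntegral.integral_ofReal]
    congr 1; funext θ; rw [Complex.mul_conj]
  have hnC : (n' : ℂ) = (m' : ℂ) - (b' : ℂ) := by
    have expand : ∀ θ : ℝ, ((Complex.normSq (V θ - g (eC θ) * S θ) : ℝ) : ℂ)
        = V θ * conj (V θ) - V θ * conj (g (eC θ) * S θ)
          - (g (eC θ) * S θ) * conj (V θ) + (g (eC θ) * S θ) * conj (g (eC θ) * S θ) := by
      intro θ
      rw [← Complex.mul_conj, map_sub]
      ring
    rw [hn'def, ← intervalIntegral.integral_ofReal]
    simp_rw [expand]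
    rw [intervalIntegral.integral_add (((hint1.sub hint2).sub hint3)) hint4,
      intervalIntegral.integral_sub (hint1.sub hint2) hint3,
      intervalIntegral.integral_sub hint1 hint2]
    have hconjint : (∫ θ in (0:ℝ)..(2*Real.pi), (g (eC θ) * S θ) * conj (V θ))
        = conj (∫ θ in (0:ℝ)..(2*Real.pi), V θ * conj (g (eC θ) * S θ)) := by
      rw [← _root_.intervalIntegral_conj]
      congr 1; funext θ; rw [_root_.map_mul, Complex.conj_conj]; ring
    rw [hconjint, hVS, ← hmC]
    have hVV : (∫ θ in (0:ℝ)..(2*Real.pi), V θ * conj (V θ)) = (b' : ℂ) := by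
      rw [hb'def, ← intervalIntegral.integral_ofReal]
      congr 1; funext θ; rw [Complex.mul_conj]
    rw [hVV, hB]
    have : conj (2 * (Real.pi:ℂ) * B') = 2 * Real.pi * B' := by
      rw [← hB]
      simp [Complex.conj_ofReal]
    rw [this]
    ring
  -- inequalities
  have hn_nonneg : 0 ≤ n' := by
    apply intervalIntegral.integral_nonneg (le_of_lt pipos)
    intro u _
    exact Complex.normSq_nonneg _
  have hm_le : m' ≤ a' := by
    apply intervalIntegral.integral_mono_on (le_of_lt pipos)
    · exact ((Complex.continuous_normSq.comp (hgc.mul hScont))).intervalIntegrable _ _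
    · exact ((Complex.continuous_normSq.comp hScont)).intervalIntegrable _ _
    · intro θ _
      rw [Complex.normSq_mul]
      have h1 : ‖g (eC θ)‖ ≤ 1 := hb _ (le_of_eq (eC_abs θ))
      have h2 : Complex.normSq (g (eC θ)) ≤ 1 := by
        rw [Complex.normSq_eq_norm_sq]
        nlinarith [norm_nonneg (g (eC θ))]
      nlinarith [Complex.normSq_nonneg (S θ)]
  have hb_le : b' ≤ a' := by
    have : n' = m' - b' := by exact_mod_cast hnC
    linarith
  -- final assembly
  have hQ : (∑ i, ∑ j, conj (x i) * x j *
      ((1 - g (w i) * conj (g (w j))) / (1 - w i * conj (w j)))) = A' - B' := by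
    rw [hA'def, hB'def, ← Finset.sum_sub_distrib]
    refine Finset.sum_congr rfl fun i _ => ?_
    rw [← Finset.sum_sub_distrib]
    refine Finset.sum_congr rfl fun j _ => ?_
    simp only [hcg, hc, _root_.map_mul, Complex.conj_conj]
    ring
  rw [hQ]
  have hfin : A' - B' = (((a' - b') / (2*Real.pi) : ℝ) : ℂ) := by
    have h2pine : ((2*Real.pi : ℝ) : ℂ) ≠ 0 := by
      simp [Real.pi_ne_zero]
    push_cast
    rw [eq_div_iff (by push_cast at h2pine ⊢; exact h2pine)]
    push_cast at hA hB
    linear_combination hB - hA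
  rw [hfin]
  rw [Complex.zero_le_real]
  exact div_nonneg (by linarith) (le_of_lt pipos)

lemma pick_psd' (f : ℂ → ℂ) (hf : DifferentiableOn ℂ f (ball 0 1))
    (hbd : ∀ z : ℂ, ‖z‖ < 1 → ‖f z‖ ≤ 1)
    {n : ℕ} (w : Fin n → ℂ) (hw : ∀ i, ‖w i‖ < 1) (x : Fin n → ℂ) :
    0 ≤ ∑ i, ∑ j, conj (x i) * x j *
      ((1 - f (w i) * conj (f (w j))) / (1 - w i * conj (w j))) := by
  classical
  set F : ℝ → ℂ := fun r => ∑ i, ∑ j, conj (x i) * x j *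
      ((1 - f ((r:ℂ) * w i) * conj (f ((r:ℂ) * w j))) / (1 - w i * conj (w j))) with hF
  have hmem : ∀ z : ℂ, ‖z‖ < 1 → z ∈ ball (0:ℂ) 1 := by
    intro z hz; simp [mem_ball, Complex.dist_eq, hz]
  have hpos : ∀ r ∈ Set.Ioo (0:ℝ) 1, 0 ≤ F r := by
    intro r hr
    set g : ℂ → ℂ := fun z => f ((r:ℂ) * z) with hgdef
    have habs : ∀ z : ℂ, ‖z‖ ≤ 1 → ‖(r:ℂ) * z‖ < 1 := by
      intro z hz
      rw [norm_mul, Complex.norm_real, Real.norm_eq_abs, abs_of_pos hr.1]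
      nlinarith [hr.1, hr.2, norm_nonneg z]
    have hmaps : Set.MapsTo (fun z : ℂ => (r:ℂ) * z) (closure (ball 0 1)) (ball (0:ℂ) 1) := by
      intro z hz
      rw [closure_ball (0:ℂ) one_ne_zero, mem_closedBall, Complex.dist_eq, sub_zero] at hz
      exact hmem _ (habs z hz)
    have hg : DiffContOnCl ℂ g (ball 0 1) := by
      constructor
      · exact hf.comp ((differentiable_const _).mul differentiable_id).differentiableOn
          (fun z hz => hmaps (subset_closure hz))
      · exact hf.continuousOn.comp (continuous_const.mul continuous_id).continuousOn
          hmaps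
    have hgb : ∀ z : ℂ, ‖z‖ ≤ 1 → ‖g z‖ ≤ 1 := fun z hz =>
      hbd _ (habs z hz)
    have := pick_psd g hg hgb w hw x
    exact this
  -- limit as r → 1⁻
  set Q : ℂ := ∑ i, ∑ j, conj (x i) * x j *
      ((1 - f (w i) * conj (f (w j))) / (1 - w i * conj (w j))) with hQdef
  have hT : Filter.Tendsto F (nhdsWithin (1:ℝ) (Set.Iio 1)) (nhds Q) := by
    rw [hF, hQdef]
    apply tendsto_finset_sum
    intro i _
    apply tendsto_finset_sum
    intro j _
    have hin : ∀ k : Fin n, Filter.Tendsto (fun r : ℝ => f ((r:ℂ) * w k))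
        (nhdsWithin (1:ℝ) (Set.Iio 1)) (nhds (f (w k))) := by
      intro k
      have hout : ContinuousAt f (w k) :=
        hf.continuousOn.continuousAt (isOpen_ball.mem_nhds (hmem _ (hw k)))
      have hinner : Filter.Tendsto (fun r : ℝ => (r:ℂ) * w k)
          (nhdsWithin (1:ℝ) (Set.Iio 1)) (nhds (w k)) := by
        have : Filter.Tendsto (fun r : ℝ => (r:ℂ) * w k) (nhds 1) (nhds ((1:ℂ) * w k)) :=
          ((Complex.continuous_ofReal.mul continuous_const).tendsto 1).congr (fun _ => rfl)
        rw [one_mul] at this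
        exact this.mono_left nhdsWithin_le_nhds
      exact hout.tendsto.comp hinner
    have hden : (1 : ℂ) - w i * conj (w j) ≠ 0 := by
      apply one_sub_mul_ne (hw i)
      rw [Complex.norm_conj]
      exact le_of_lt (hw j)
    apply Filter.Tendsto.mul tendsto_const_nhds
    apply Filter.Tendsto.div _ tendsto_const_nhds hden
    apply Filter.Tendsto.sub tendsto_const_nhds
    exact (hin i).mul ((Complex.continuous_conj.tendsto _).comp (hin j))
  have hev : ∀ᶠ r in nhdsWithin (1:ℝ) (Set.Iio 1), 0 ≤ F r := by
    filter_upwards [Ioo_mem_nhdsLT_of_mem (Set.mem_Ioc.mpr ⟨zero_lt_one, le_refl 1⟩)] with r hr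
    exact hpos r hr
  rw [show (0:ℂ) = 0 from rfl] at *
  rw [Complex.le_def]
  constructor
  · have hre : Filter.Tendsto (fun r => (F r).re) (nhdsWithin (1:ℝ) (Set.Iio 1)) (nhds Q.re) :=
      (Complex.continuous_re.tendsto Q).comp hT
    apply ge_of_tendsto hre
    filter_upwards [hev] with r hr
    simpa using (Complex.le_def.mp hr).1
  · have him : Filter.Tendsto (fun r => (F r).im) (nhdsWithin (1:ℝ) (Set.Iio 1)) (nhds Q.im) :=
      (Complex.continuous_im.tendsto Q).comp hT
    have him0 : Filter.Tendsto (fun r => (F r).im) (nhdsWithin (1:ℝ) (Set.Iio 1)) (nhds 0) := by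
      apply Filter.Tendsto.congr' _ tendsto_const_nhds
      filter_upwards [hev] with r hr
      simpa using (Complex.le_def.mp hr).2
    have := tendsto_nhds_unique him him0
    simpa using this.symm

lemma schur_product {n : ℕ} {M N : Matrix (Fin n) (Fin n) ℂ}
    (hM : M.PosSemidef) (hN : N.PosSemidef) :
    (Matrix.of fun i j => M i j * N i j).PosSemidef := by
  exact hM.hadamard hN

lemma pick_matrix_psd (f : ℂ → ℂ) (hf : DifferentiableOn ℂ f (ball 0 1))
    (hbd : ∀ z : ℂ, ‖z‖ < 1 → ‖f z‖ ≤ 1)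
    {n : ℕ} (w : Fin n → ℂ) (hw : ∀ i, ‖w i‖ < 1) :
    (Matrix.of fun i j : Fin n =>
      (1 - f (w i) * conj (f (w j))) / (1 - w i * conj (w j))).PosSemidef := by
  refine Matrix.posSemidef_iff_dotProduct_mulVec.mpr ⟨?_, ?_⟩
  · ext i j
    simp only [Matrix.conjTranspose_apply, Matrix.of_apply, Complex.star_def, map_div₀, map_sub,
      _root_.map_mul, _root_.map_one, Complex.conj_conj]
    ring
  · intro y
    have key := pick_psd' f hf hbd w hw y
    have : dotProduct (star y) ((Matrix.of fun i j : Fin n =>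
        (1 - f (w i) * conj (f (w j))) / (1 - w i * conj (w j))) *ᵥ y)
        = ∑ i, ∑ j, conj (y i) * y j *
          ((1 - f (w i) * conj (f (w j))) / (1 - w i * conj (w j))) := by
      simp only [dotProduct, Matrix.mulVec, Matrix.of_apply, Pi.star_apply,
        RCLike.star_def, Finset.mul_sum]
      refine Finset.sum_congr rfl fun i _ => Finset.sum_congr rfl fun j _ => ?_
      ring
    rw [this]
    exact key

lemma sq_kernel_psd (f : ℂ → ℂ) (hf : DifferentiableOn ℂ f (ball 0 1))
    (hbd : ∀ z : ℂ, ‖z‖ < 1 → ‖f z‖ ≤ 1)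
    {n : ℕ} (w : Fin n → ℂ) (hw : ∀ i, ‖w i‖ < 1) :
    (Matrix.of fun i j : Fin n =>
      (1 - f (w i) * conj (f (w j))) ^ 2 / (1 - w i * conj (w j)) ^ 2).PosSemidef := by
  have hP := pick_matrix_psd f hf hbd w hw
  have h2 := schur_product hP hP
  have : (Matrix.of fun i j : Fin n =>
      (Matrix.of fun i j : Fin n =>
        (1 - f (w i) * conj (f (w j))) / (1 - w i * conj (w j))) i j *
      (Matrix.of fun i j : Fin n =>
        (1 - f (w i) * conj (f (w j))) / (1 - w i * conj (w j))) i j)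
      = Matrix.of fun i j : Fin n =>
        (1 - f (w i) * conj (f (w j))) ^ 2 / (1 - w i * conj (w j)) ^ 2 := by
    ext i j
    simp only [Matrix.of_apply]
    rw [div_mul_div_comm, ← pow_two, ← pow_two]
  rwa [this] at h2
/-- Characterization of the class 𝒮_B: the kernel
`(z,λ) ↦ (1−f(z)·conj(f(λ)))²/(1−z·conj(λ))²` is positive semi-definite on 𝔻×𝔻
iff `f ∈ 𝒮 ∪ 𝒮⁻¹`. -/
theorem SB_eq_S_union_Sinv (f : ℂ → ℂ)
    (hf : DifferentiableOn ℂ f {z : ℂ | ‖z‖ < 1}) :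
    (∀ (n : ℕ) (x : Fin n → ℂ), (∀ i, ‖x i‖ < 1) →
        (Matrix.of fun i j : Fin n =>
          (1 - f (x i) * conj (f (x j))) ^ 2 /
            (1 - x i * conj (x j)) ^ 2).PosSemidef)
      ↔ ((∀ z : ℂ, ‖z‖ < 1 → ‖f z‖ ≤ 1)
          ∨ (∀ z : ℂ, ‖z‖ < 1 → 1 ≤ ‖f z‖)) := by
  have hset : {z : ℂ | ‖z‖ < 1} = ball (0:ℂ) 1 := by
    ext z; simp [mem_ball, Complex.dist_eq]
  rw [hset] at hf
  constructor
  · intro H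
    by_cases h1 : ∀ z : ℂ, ‖z‖ < 1 → ‖f z‖ ≤ 1
    · exact Or.inl h1
    · right
      push_neg at h1
      obtain ⟨a, ha1, ha2⟩ := h1
      intro z hz
      by_contra hzc
      push_neg at hzc
      -- a path from a to z inside the disc
      set γ : ℝ → ℂ := fun t => ((1 - t : ℝ) : ℂ) * a + (t : ℂ) * z with hγ
      have hγball : ∀ t ∈ Set.Icc (0:ℝ) 1, ‖γ t‖ < 1 := by
        intro t ht
        have hle : ‖γ t‖ ≤ (1 - t) * ‖a‖ + t * ‖z‖ := by
          refine le_trans (norm_add_le _ _) ?_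
          rw [norm_mul, norm_mul, Complex.norm_real, Complex.norm_real, Real.norm_eq_abs, Real.norm_eq_abs,
            _root_.abs_of_nonneg (by linarith [ht.1, ht.2] : (0:ℝ) ≤ 1 - t),
            _root_.abs_of_nonneg ht.1]
        have hm : (1 - t) * ‖a‖ + t * ‖z‖
            ≤ max (‖a‖) (‖z‖) := by
          nlinarith [mul_nonneg (by linarith [ht.2] : (0:ℝ) ≤ 1 - t)
              (sub_nonneg.mpr (le_max_left (‖a‖) (‖z‖))),
            mul_nonneg ht.1
              (sub_nonneg.mpr (le_max_right (‖a‖) (‖z‖)))]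
        have : (1 - t) * ‖a‖ + t * ‖z‖ < 1 :=
          lt_of_le_of_lt hm (max_lt ha1 hz)
        linarith
      have hγcont : Continuous γ := by
        apply Continuous.add
        · exact (Complex.continuous_ofReal.comp (by continuity)).mul continuous_const
        · exact (Complex.continuous_ofReal.comp continuous_id).mul continuous_const
      have hφcont : ContinuousOn (fun t : ℝ => ‖f (γ t)‖) (Set.Icc 0 1) := by
        apply continuous_norm.comp_continuousOn
        apply hf.continuousOn.comp hγcont.continuousOn
        intro t ht
        simp [mem_ball, Complex.dist_eq, hγball t ht]
      have hsub := intermediate_value_Icc' (zero_le_one) hφcont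
      have h10 : γ (1:ℝ) = z := by simp [hγ]
      have h00 : γ (0:ℝ) = a := by simp [hγ]
      have hmem1 : (1:ℝ) ∈ Set.Icc (‖f (γ 1)‖) (‖f (γ 0)‖) := by
        rw [h10, h00]
        exact ⟨le_of_lt hzc, le_of_lt ha2⟩
      obtain ⟨t₀, ht₀, hc⟩ := hsub hmem1
      set cpt : ℂ := γ t₀ with hcpt
      have hc' : ‖f cpt‖ = 1 := hc
      have hcball : ‖cpt‖ < 1 := hγball t₀ ht₀
      -- 2x2 positivity
      have hM := H 2 ![cpt, a] (by
        intro i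
        fin_cases i
        · simpa using hcball
        · simpa using ha1)
      set M : Matrix (Fin 2) (Fin 2) ℂ := Matrix.of fun i j : Fin 2 =>
        (1 - f (![cpt, a] i) * conj (f (![cpt, a] j))) ^ 2 /
          (1 - (![cpt, a] i) * conj (![cpt, a] j)) ^ 2 with hMdef
      have h00M : M 0 0 = 0 := by
        have hfc : f cpt * conj (f cpt) = 1 := by
          rw [Complex.mul_conj]
          norm_cast
          rw [Complex.normSq_eq_norm_sq, hc']
          norm_num
        simp only [hMdef, Matrix.of_apply]
        simp only [Matrix.cons_val_zero]
        rw [hfc]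
        simp
      have hzero : M *ᵥ Pi.single 0 1 = 0 := by
        apply (hM.dotProduct_mulVec_zero_iff (Pi.single 0 1)).mp
        have : dotProduct (star (Pi.single 0 1 : Fin 2 → ℂ)) (M *ᵥ Pi.single 0 1)
            = M 0 0 := by
          simp [dotProduct, Matrix.mulVec, Fin.sum_univ_two, Pi.single_apply]
        rw [this, h00M]
      have h10M : M 1 0 = 0 := by
        have := congrFun hzero 1
        simp only [Matrix.mulVec, dotProduct, Fin.sum_univ_two, Pi.single_apply] at this
        simpa using this
      -- extract contradiction
      have hden : (1 - a * conj cpt) ^ 2 ≠ 0 := by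
        apply pow_ne_zero
        apply one_sub_mul_ne ha1
        rw [Complex.norm_conj]
        exact le_of_lt hcball
      simp only [hMdef, Matrix.of_apply] at h10M
      simp only [Matrix.cons_val_one, Matrix.cons_val_zero, Matrix.head_cons] at h10M
      rcases div_eq_zero_iff.mp h10M with hnum | hd
      · have h11 : f a * conj (f cpt) = 1 := by
          have := pow_eq_zero_iff (n := 2) (by norm_num) |>.mp hnum
          linear_combination -this
        have habs : ‖f a‖ * ‖f cpt‖ = 1 := by
          have habs' : ‖f a * conj (f cpt)‖ = 1 := by rw [h11, norm_one]
          rwa [norm_mul, Complex.norm_conj] at habs'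
        rw [hc', mul_one] at habs
        linarith
      · exact hden hd
  · intro H n x hx
    rcases H with hS | hSinv
    · exact sq_kernel_psd f hf hS x hx
    · have hne : ∀ z ∈ ball (0:ℂ) 1, f z ≠ 0 := by
        intro z hz h0
        have := hSinv z (by simpa [mem_ball, Complex.dist_eq] using hz)
        rw [h0] at this
        simp at this
        linarith
      have hg : DifferentiableOn ℂ (fun z => (f z)⁻¹) (ball 0 1) := hf.inv hne
      have hgbd : ∀ z : ℂ, ‖z‖ < 1 → ‖(f z)⁻¹‖ ≤ 1 := by
        intro z hz
        rw [norm_inv]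
        exact inv_le_one_of_one_le₀ (hSinv z hz)
      have hN := sq_kernel_psd _ hg hgbd x hx
      have hD := hN.mul_mul_conjTranspose_same (Matrix.diagonal fun i => (f (x i))^2)
      have heq : (Matrix.diagonal fun i => (f (x i))^2) *
          (Matrix.of fun i j : Fin n =>
            (1 - (f (x i))⁻¹ * conj ((f (x j))⁻¹)) ^ 2 / (1 - x i * conj (x j)) ^ 2) *
          (Matrix.diagonal fun i => (f (x i))^2)ᴴ
          = Matrix.of fun i j : Fin n =>
            (1 - f (x i) * conj (f (x j))) ^ 2 / (1 - x i * conj (x j)) ^ 2 := by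
        rw [Matrix.diagonal_conjTranspose]
        ext i j
        simp only [Matrix.mul_diagonal, Matrix.diagonal_mul, Matrix.of_apply, Pi.star_apply,
          RCLike.star_def, map_pow, map_inv₀]
        have hi : f (x i) ≠ 0 := hne _ (by simp [mem_ball, Complex.dist_eq, hx i])
        have hj : f (x j) ≠ 0 := hne _ (by simp [mem_ball, Complex.dist_eq, hx j])
        have hj' : conj (f (x j)) ≠ 0 := by simpa using hj
        have hdne : ((1:ℂ) - x i * conj (x j)) ≠ 0 := by
          apply one_sub_mul_ne (hx i)
          rw [Complex.norm_conj]
          exact le_of_lt (hx j)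
        field_simp
        ring
      rw [heq] at hD
      exact hD
end

section
/- Let a ∈ Ω be nonneutral. For all z, w ∈ Ω_a (i.e. z, w ∈ Ω with ⟨z,a⟩_K ≠ 1 and ⟨w,a⟩_K ≠ 1), one has 1 − ⟨φ_a(z), φ_a(w)⟩_K = (1 − ⟨a,a⟩_K)·(1 − ⟨z,w⟩_K)/((1 − ⟨z,a⟩_K)·(1 − ⟨a,w⟩_K)). In particular, 1 − ⟨φ_a(z), φ_a(z)⟩_K = (1 − ⟨a,a⟩_K)·(1 − ⟨z,z⟩_K)/|1 − ⟨z,a⟩_K|² for all z ∈ Ω_a. -/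
open Complex ComplexConjugate ComplexOrder

/-- The indefinite inner product `⟨z,w⟩_K = z₁·conj(w₁) − z₂·conj(w₂)` on ℂ². -/
noncomputable def Kip (z w : Fin 2 → ℂ) : ℂ :=
  z 0 * conj (w 0) - z 1 * conj (w 1)

/-- The unit ball `Ω = {z : |z₁|² − |z₂|² < 1}` of the Kreĭn space `(ℂ², ⟨·,·⟩_K)`. -/
def Omega : Set (Fin 2 → ℂ) :=
  {z | ‖z 0‖ ^ 2 - ‖z 1‖ ^ 2 < 1}

/-- The birational involution `φ_a(z) = (a − P_a z − s_a Q_a z)/(1 − ⟨z,a⟩_K)`,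
with the convention `φ_0(z) = −z`.  Here `P_a z = (⟨z,a⟩_K/⟨a,a⟩_K)a`,
`Q_a = I − P_a` and `s_a = (1 − ⟨a,a⟩_K)^{1/2}` (note `⟨a,a⟩_K` is real). -/
noncomputable def phiK (a z : Fin 2 → ℂ) : Fin 2 → ℂ :=
  if a = 0 then -z
  else
    (1 - Kip z a)⁻¹ •
      (a - (Kip z a / Kip a a) • a
        - (Real.sqrt (1 - (Kip a a).re) : ℂ) • (z - (Kip z a / Kip a a) • a))

lemma Kip_conj (z w : Fin 2 → ℂ) : conj (Kip z w) = Kip w z := by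
  simp [Kip]; ring

lemma Kip_smul_left (c : ℂ) (x y : Fin 2 → ℂ) : Kip (c • x) y = c * Kip x y := by
  simp [Kip]; ring

lemma Kip_smul_right (c : ℂ) (x y : Fin 2 → ℂ) : Kip x (c • y) = conj c * Kip x y := by
  simp [Kip]; ring

lemma Kip_sub_left (x y w : Fin 2 → ℂ) : Kip (x - y) w = Kip x w - Kip y w := by
  simp [Kip]; ring

lemma Kip_sub_right (x y w : Fin 2 → ℂ) : Kip w (x - y) = Kip w x - Kip w y := by
  simp [Kip]; ring

/-- The fundamental identity
`1 − ⟨φ_a(z), φ_a(w)⟩_K = (1 − ⟨a,a⟩_K)(1 − ⟨z,w⟩_K)/((1 − ⟨z,a⟩_K)(1 − ⟨a,w⟩_K))`,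
and its diagonal special case. -/
theorem one_sub_Kip_phiK (a : Fin 2 → ℂ) (haO : a ∈ Omega) (ha : Kip a a ≠ 0) :
    (∀ z w : Fin 2 → ℂ, z ∈ Omega → w ∈ Omega → Kip z a ≠ 1 → Kip w a ≠ 1 →
      1 - Kip (phiK a z) (phiK a w)
        = (1 - Kip a a) * (1 - Kip z w) / ((1 - Kip z a) * (1 - Kip a w)))
    ∧ (∀ z : Fin 2 → ℂ, z ∈ Omega → Kip z a ≠ 1 →
      1 - Kip (phiK a z) (phiK a z)
        = (1 - Kip a a) * (1 - Kip z z) / (((‖1 - Kip z a‖ : ℝ) : ℂ) ^ 2)) := by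

  have ha0 : a ≠ 0 := by rintro rfl; simp [Kip] at ha
  have htre : Kip a a = ((Complex.normSq (a 0) - Complex.normSq (a 1) : ℝ) : ℂ) := by
    simp [Kip, Complex.mul_conj]
  have hre : (Kip a a).re = Complex.normSq (a 0) - Complex.normSq (a 1) := by
    rw [htre]; simp
  have hlt : Complex.normSq (a 0) - Complex.normSq (a 1) < 1 := by
    have := haO
    simpa [Omega, Complex.sq_norm] using this
  have hs2 : ((Real.sqrt (1 - (Kip a a).re) : ℝ) : ℂ) ^ 2 = 1 - Kip a a := by
    have h0 : (0:ℝ) ≤ 1 - (Kip a a).re := by rw [hre]; linarith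
    have h1 : (Real.sqrt (1 - (Kip a a).re)) ^ 2 = 1 - (Kip a a).re := Real.sq_sqrt h0
    calc ((Real.sqrt (1 - (Kip a a).re) : ℝ) : ℂ) ^ 2
        = (((Real.sqrt (1 - (Kip a a).re)) ^ 2 : ℝ) : ℂ) := by push_cast; ring
      _ = ((1 - (Kip a a).re : ℝ) : ℂ) := by rw [h1]
      _ = 1 - Kip a a := by rw [hre, htre]; push_cast; ring
  have hK : ∀ z w : Fin 2 → ℂ, Kip z a ≠ 1 → Kip w a ≠ 1 →
      Kip (phiK a z) (phiK a w)
        = (Kip a a - Kip a w - Kip z a + Kip z a * Kip a w / Kip a a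
            + ((Real.sqrt (1 - (Kip a a).re) : ℝ) : ℂ) ^ 2
              * (Kip z w - Kip z a * Kip a w / Kip a a))
          / ((1 - Kip z a) * (1 - Kip a w)) := by
    intro z w hz hw
    have h1 : (1 : ℂ) - Kip z a ≠ 0 := sub_ne_zero.mpr (Ne.symm hz)
    have h2 : (1 : ℂ) - Kip a w ≠ 0 := by
      rw [← Kip_conj w a, ← map_one (starRingEnd ℂ), ← map_sub]
      exact (map_ne_zero _).mpr (sub_ne_zero.mpr (Ne.symm hw))
    simp only [phiK, if_neg ha0, Kip_smul_left, Kip_smul_right, Kip_sub_left,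
      Kip_sub_right, map_div₀, map_mul, map_sub, map_one, map_inv₀, Kip_conj,
      Complex.conj_ofReal]
    field_simp
    ring
  have hmain : ∀ z w : Fin 2 → ℂ, Kip z a ≠ 1 → Kip w a ≠ 1 →
      1 - Kip (phiK a z) (phiK a w)
        = (1 - Kip a a) * (1 - Kip z w) / ((1 - Kip z a) * (1 - Kip a w)) := by
    intro z w hz hw
    have h1 : (1 : ℂ) - Kip z a ≠ 0 := sub_ne_zero.mpr (Ne.symm hz)
    have h2 : (1 : ℂ) - Kip a w ≠ 0 := by
      rw [← Kip_conj w a, ← map_one (starRingEnd ℂ), ← map_sub]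
      exact (map_ne_zero _).mpr (sub_ne_zero.mpr (Ne.symm hw))
    rw [hK z w hz hw, hs2]
    field_simp
    ring
  refine ⟨fun z w _ _ hz hw => hmain z w hz hw, fun z _ hz => ?_⟩
  rw [hmain z z hz hz]
  congr 1
  have h : (1:ℂ) - Kip a z = conj (1 - Kip z a) := by rw [map_sub, map_one, Kip_conj]
  rw [h, Complex.mul_conj']
end

section
/- Let a ∈ Ω be nonneutral. For every z ∈ Ω_a, the point φ_a(z) again belongs to Ω_a, and φ_a(φ_a(z)) = z. In particular, the restriction of φ_a to Ω_a is an involutive bijection of Ω_a onto itself. -/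
open Complex ComplexConjugate ComplexOrder

lemma kip_self (v : Fin 2 → ℂ) :
    Kip v v = ((Complex.normSq (v 0) - Complex.normSq (v 1) : ℝ) : ℂ) := by
  simp [Kip, Complex.mul_conj]

lemma mem_omega (v : Fin 2 → ℂ) :
    v ∈ Omega ↔ Complex.normSq (v 0) - Complex.normSq (v 1) < 1 := by
  simp [Omega, Complex.sq_norm]

lemma phiK_apply (a z : Fin 2 → ℂ) (ha0 : a ≠ 0) (i : Fin 2) :
    phiK a z i = (1 - Kip z a)⁻¹ *
      (a i - (Kip z a / Kip a a) * a i
        - (Real.sqrt (1 - (Kip a a).re) : ℂ) * (z i - (Kip z a / Kip a a) * a i)) := by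
  simp [phiK, if_neg ha0, Pi.smul_apply, Pi.sub_apply, smul_eq_mul]
open Complex ComplexConjugate ComplexOrder

lemma phiK_main (a : Fin 2 → ℂ) (haO : a ∈ Omega) (ha : Kip a a ≠ 0)
    (z : Fin 2 → ℂ) (hzO : z ∈ Omega) (hz1 : Kip z a ≠ 1) :
    phiK a z ∈ Omega ∧ Kip (phiK a z) a ≠ 1 ∧ phiK a (phiK a z) = z := by
  have ha0 : a ≠ 0 := by rintro rfl; simp [Kip] at ha
  have hAlt : (Kip a a).re < 1 := by
    rw [kip_self]; simpa using (mem_omega a).1 haO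
  have hA1 : Kip a a ≠ 1 := by
    intro h; rw [h] at hAlt; simp at hAlt
  have hAA : Kip a a = ((Kip a a).re : ℂ) := by rw [kip_self]; simp
  set r : ℝ := Real.sqrt (1 - (Kip a a).re) with hr
  have hrpos : 0 < r := Real.sqrt_pos.2 (by linarith)
  have hrsq : ((r : ℂ))^2 = 1 - Kip a a := by
    rw [hr, ← Complex.ofReal_pow, Real.sq_sqrt (by linarith)]
    push_cast
    rw [← hAA]
  have hK1 : (1:ℂ) - Kip z a ≠ 0 := sub_ne_zero.mpr (Ne.symm hz1)
  have ha' : a 0 * (starRingEnd ℂ) (a 0) - a 1 * (starRingEnd ℂ) (a 1) ≠ 0 := ha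
  have e2 : ∀ i, (1 - Kip z a) * phiK a z i
      = a i - (Kip z a / Kip a a) * a i - (r:ℂ) * (z i - (Kip z a / Kip a a) * a i) := by
    intro i
    rw [phiK_apply a z ha0 i, ← mul_assoc, mul_inv_cancel₀ hK1, one_mul, ← hr]
  have hwi : ∀ i, phiK a z i
      = (a i - (Kip z a / Kip a a) * a i - (r:ℂ) * (z i - (Kip z a / Kip a a) * a i))
        / (1 - Kip z a) := by
    intro i; rw [eq_div_iff hK1, mul_comm]; exact e2 i
  have hKw : Kip (phiK a z) a = (Kip a a - Kip z a) / (1 - Kip z a) := by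
    rw [eq_div_iff hK1]
    have expand : Kip (phiK a z) a * (1 - Kip z a)
        = ((1 - Kip z a) * phiK a z 0) * conj (a 0)
          - ((1 - Kip z a) * phiK a z 1) * conj (a 1) := by
      simp only [Kip]; ring
    rw [expand, e2 0, e2 1]
    simp only [Kip]
    have ha'' : a 0 * (starRingEnd ℂ) (a 0) - (starRingEnd ℂ) (a 1) * a 1 ≠ 0 := by
      rwa [mul_comm ((starRingEnd ℂ) (a 1))]
    field_simp
    ring
  have hKwne1 : Kip (phiK a z) a ≠ 1 := by
    rw [hKw]; intro h; rw [div_eq_one_iff_eq hK1] at h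
    exact hA1 (by linear_combination h)
  have hone : (1:ℂ) - (Kip a a - Kip z a) / (1 - Kip z a) = (1 - Kip a a) / (1 - Kip z a) := by
    field_simp
    ring
  have h3' : (1:ℂ) - (Kip a a - Kip z a) / (1 - Kip z a) ≠ 0 := by
    rw [hone]
    exact div_ne_zero (by rw [← hrsq]; exact pow_ne_zero 2 (Complex.ofReal_ne_zero.2 hrpos.ne')) hK1
  have h1A : (1:ℂ) - Kip a a ≠ 0 := by
    rw [← hrsq]; exact pow_ne_zero 2 (Complex.ofReal_ne_zero.2 hrpos.ne')
  have hinv : phiK a (phiK a z) = z := by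
    funext i
    rw [phiK_apply a (phiK a z) ha0 i, ← hr, hKw, hwi i]
    field_simp [h1A]
    linear_combination ((Kip a a * z i - Kip z a * a i) * Kip a a ^ 2 * (1 - Kip z a) ^ 3 + a i * (Kip a a ^ 2 * Kip z a * (1 - Kip z a) ^ 3 - Kip z a) + z i * (Kip a a - Kip a a ^ 3 * (1 - Kip z a) ^ 3)) * hrsq
  have hm : ∀ i, (Kip a a * (1 - Kip z a)) * phiK a z i
      = Kip a a * a i - Kip z a * a i - (r:ℂ) * (Kip a a * z i - Kip z a * a i) := by
    intro i
    rw [mul_assoc, e2 i]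
    field_simp [ha]
  have hc : ∀ i, ((starRingEnd ℂ) (Kip a a) * (1 - (starRingEnd ℂ) (Kip z a))) * (starRingEnd ℂ) (phiK a z i)
      = (starRingEnd ℂ) (Kip a a) * (starRingEnd ℂ) (a i) - (starRingEnd ℂ) (Kip z a) * (starRingEnd ℂ) (a i)
        - (r:ℂ) * ((starRingEnd ℂ) (Kip a a) * (starRingEnd ℂ) (z i) - (starRingEnd ℂ) (Kip z a) * (starRingEnd ℂ) (a i)) := by
    intro i
    have h := congrArg (starRingEnd ℂ) (hm i)
    simpa [map_mul, map_sub, map_one, Complex.conj_ofReal] using h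
  have keyP : (1 - Kip (phiK a z) (phiK a z)) * ((1 - Kip z a) * (starRingEnd ℂ) (1 - Kip z a)) * (Kip a a * Kip a a)
      = ((1 - Kip a a) * (1 - Kip z z)) * (Kip a a * Kip a a) := by
    have hm0 := hm 0; have hm1 := hm 1; have hc0 := hc 0; have hc1 := hc 1
    have hrsq' := hrsq
    simp only [Kip, map_sub, map_mul, map_one, Complex.conj_conj] at hm0 hm1 hc0 hc1 hrsq' ⊢
    linear_combination
      (-(((a 0 * (starRingEnd ℂ) (a 0) - a 1 * (starRingEnd ℂ) (a 1)) * (1 - ((starRingEnd ℂ) (z 0) * a 0 - (starRingEnd ℂ) (z 1) * a 1))) * (starRingEnd ℂ) (phiK a z 0))) * hm0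
      + (-((a 0 * (starRingEnd ℂ) (a 0) - a 1 * (starRingEnd ℂ) (a 1)) * a 0 - (z 0 * (starRingEnd ℂ) (a 0) - z 1 * (starRingEnd ℂ) (a 1)) * a 0 - (r:ℂ) * ((a 0 * (starRingEnd ℂ) (a 0) - a 1 * (starRingEnd ℂ) (a 1)) * z 0 - (z 0 * (starRingEnd ℂ) (a 0) - z 1 * (starRingEnd ℂ) (a 1)) * a 0))) * hc0
      + (((a 0 * (starRingEnd ℂ) (a 0) - a 1 * (starRingEnd ℂ) (a 1)) * (1 - ((starRingEnd ℂ) (z 0) * a 0 - (starRingEnd ℂ) (z 1) * a 1))) * (starRingEnd ℂ) (phiK a z 1)) * hm1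
      + ((a 0 * (starRingEnd ℂ) (a 0) - a 1 * (starRingEnd ℂ) (a 1)) * a 1 - (z 0 * (starRingEnd ℂ) (a 0) - z 1 * (starRingEnd ℂ) (a 1)) * a 1 - (r:ℂ) * ((a 0 * (starRingEnd ℂ) (a 0) - a 1 * (starRingEnd ℂ) (a 1)) * z 1 - (z 0 * (starRingEnd ℂ) (a 0) - z 1 * (starRingEnd ℂ) (a 1)) * a 1)) * hc1
      + (-((a 0 * (starRingEnd ℂ) (a 0) - a 1 * (starRingEnd ℂ) (a 1)) * ((a 0 * (starRingEnd ℂ) (a 0) - a 1 * (starRingEnd ℂ) (a 1)) * (z 0 * (starRingEnd ℂ) (z 0) - z 1 * (starRingEnd ℂ) (z 1)) - (z 0 * (starRingEnd ℂ) (a 0) - z 1 * (starRingEnd ℂ) (a 1)) * ((starRingEnd ℂ) (z 0) * a 0 - (starRingEnd ℂ) (z 1) * a 1)))) * hrsq'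
  have key : (1 - Kip (phiK a z) (phiK a z)) * ((1 - Kip z a) * (starRingEnd ℂ) (1 - Kip z a))
      = (1 - Kip a a) * (1 - Kip z z) :=
    mul_right_cancel₀ (mul_ne_zero ha ha) keyP
  have keyR : (1 - (Complex.normSq (phiK a z 0) - Complex.normSq (phiK a z 1))) * Complex.normSq (1 - Kip z a)
      = (1 - (Kip a a).re) * (1 - (Complex.normSq (z 0) - Complex.normSq (z 1))) := by
    have h := key
    rw [kip_self (phiK a z), kip_self z, hAA, Complex.mul_conj] at h
    exact_mod_cast h
  refine ⟨?_, hKwne1, hinv⟩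
  rw [mem_omega]
  have hnK : 0 < Complex.normSq (1 - Kip z a) := Complex.normSq_pos.2 hK1
  have hz' : Complex.normSq (z 0) - Complex.normSq (z 1) < 1 := (mem_omega z).1 hzO
  nlinarith [keyR, hnK, hz', hAlt]

/-- `φ_a` maps `Ω_a` into itself and is an involution there; in particular
`φ_a|_{Ω_a}` is a bijection of `Ω_a` onto itself. -/
theorem phiK_involutive_on_OmegaA (a : Fin 2 → ℂ) (haO : a ∈ Omega) (ha : Kip a a ≠ 0) :
    (∀ z : Fin 2 → ℂ, z ∈ Omega → Kip z a ≠ 1 →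
      phiK a z ∈ Omega ∧ Kip (phiK a z) a ≠ 1 ∧ phiK a (phiK a z) = z)
    ∧ Set.BijOn (phiK a) {z | z ∈ Omega ∧ Kip z a ≠ 1} {z | z ∈ Omega ∧ Kip z a ≠ 1} := by
  have main := phiK_main a haO ha
  refine ⟨fun z hz hz1 => main z hz hz1, ?_, ?_, ?_⟩
  · intro z hz
    exact ⟨(main z hz.1 hz.2).1, (main z hz.1 hz.2).2.1⟩
  · intro z1 h1 z2 h2 heq
    have e1 := (main z1 h1.1 h1.2).2.2
    have e2 := (main z2 h2.1 h2.2).2.2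
    rw [← e1, ← e2, heq]
  · intro y hy
    exact ⟨phiK a y, ⟨(main y hy.1 hy.2).1, (main y hy.1 hy.2).2.1⟩, (main y hy.1 hy.2).2.2⟩
end

section
/- Let a ∈ Ω be nonneutral and let T be a ♯-unitary 2×2 complex matrix. Then T·a is a nonneutral vector of Ω, and T ∘ φ_a ∘ T^♯ = φ_{T·a}, i.e. T·φ_a(T^♯ z) = φ_{T·a}(z) for every z ∈ ℂ² with ⟨z, T·a⟩_K ≠ 1. -/
open Complex ComplexConjugate ComplexOrder

lemma adjK (T : Matrix (Fin 2) (Fin 2) ℂ) (z w : Fin 2 → ℂ) :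
    Kip (T.mulVec z) w =
      Kip z ((Matrix.diagonal ![1, -1] * T.conjTranspose * Matrix.diagonal ![1, -1]).mulVec w) := by
  simp [Kip, Matrix.mulVec, dotProduct, Fin.sum_univ_two, Matrix.mul_apply,
    Matrix.conjTranspose_apply, Matrix.diagonal, map_add, map_mul, map_sub, map_neg]
  ring

lemma kip_re (z : Fin 2 → ℂ) :
    (Kip z z).re = ‖z 0‖ ^ 2 - ‖z 1‖ ^ 2 := by
  simp [Kip, Complex.mul_conj, Complex.sq_norm]

/-- For a ♯-unitary matrix `T` one has `T φ_a T^♯ = φ_{Ta}`, where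
`T^♯ = J T* J` with `J = diag(1,−1)`. -/
theorem sharp_unitary_conj_phiK (a : Fin 2 → ℂ) (haO : a ∈ Omega) (ha : Kip a a ≠ 0)
    (T : Matrix (Fin 2) (Fin 2) ℂ)
    (hT : ∀ z w : Fin 2 → ℂ, Kip (T.mulVec z) (T.mulVec w) = Kip z w) :
    Kip (T.mulVec a) (T.mulVec a) ≠ 0 ∧ T.mulVec a ∈ Omega ∧
      ∀ z : Fin 2 → ℂ, Kip z (T.mulVec a) ≠ 1 →
        T.mulVec (phiK a ((Matrix.diagonal ![1, -1] * T.conjTranspose * Matrix.diagonal ![1, -1]).mulVec z))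
          = phiK (T.mulVec a) z := by
  set S : Matrix (Fin 2) (Fin 2) ℂ :=
    Matrix.diagonal ![1, -1] * T.conjTranspose * Matrix.diagonal ![1, -1] with hS
  -- S ∘ T = id on vectors
  have hST : ∀ w : Fin 2 → ℂ, S.mulVec (T.mulVec w) = w := by
    intro w
    have key : ∀ z, Kip z (S.mulVec (T.mulVec w)) = Kip z w := by
      intro z
      rw [← adjK, hT]
    funext i
    fin_cases i
    · have h := key ![1, 0]
      simp only [Kip, Matrix.cons_val_zero, Matrix.cons_val_one, Matrix.head_cons,
        one_mul, zero_mul, sub_zero] at h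
      exact (starRingEnd ℂ).injective h
    · have h := key ![0, 1]
      simp only [Kip, Matrix.cons_val_zero, Matrix.cons_val_one, Matrix.head_cons,
        one_mul, zero_mul, zero_sub, neg_inj] at h
      exact (starRingEnd ℂ).injective h
  -- matrix identity S * T = 1 hence T * S = 1
  have hSTm : S * T = 1 := by
    have : ∀ w, (S * T).mulVec w = (1 : Matrix (Fin 2) (Fin 2) ℂ).mulVec w := by
      intro w
      rw [← Matrix.mulVec_mulVec, hST, Matrix.one_mulVec]
    ext i j
    have := congrFun (this (Pi.single j 1)) i
    simpa [Matrix.mulVec_single] using this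
  have hTSm : T * S = 1 := mul_eq_one_comm.mp hSTm
  have hTS : ∀ w : Fin 2 → ℂ, T.mulVec (S.mulVec w) = w := by
    intro w
    rw [Matrix.mulVec_mulVec, hTSm, Matrix.one_mulVec]
  have hKaa : Kip (T.mulVec a) (T.mulVec a) = Kip a a := hT a a
  have hTa0 : Kip (T.mulVec a) (T.mulVec a) ≠ 0 := by rw [hKaa]; exact ha
  refine ⟨hTa0, ?_, ?_⟩
  · have h0 : (Kip (T.mulVec a) (T.mulVec a)).re = (Kip a a).re := by rw [hKaa]
    rw [kip_re, kip_re] at h0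
    show (_ : ℝ) < 1
    rw [h0]; exact haO
  · intro z hz
    have haz : a ≠ 0 := by
      rintro rfl
      exact ha (by simp [Kip])
    have hTaz : T.mulVec a ≠ 0 := by
      intro h
      exact hTa0 (by simp [h, Kip])
    -- Kip (S z) a = Kip z (T a)
    have hKz : Kip (S.mulVec z) a = Kip z (T.mulVec a) := by
      rw [← hT (S.mulVec z) a, hTS]
    rw [phiK, phiK, if_neg haz, if_neg hTaz, hKz, hKaa,
      Matrix.mulVec_smul, Matrix.mulVec_sub, Matrix.mulVec_sub, Matrix.mulVec_smul,
      Matrix.mulVec_smul, Matrix.mulVec_sub, Matrix.mulVec_smul, hTS]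
end

section
/- For all z, w ∈ 𝔻, ρ(z,w)² = ⟨φ_{Φ(w)}(Φ(z)), φ_{Φ(w)}(Φ(z))⟩_K. -/
open Complex ComplexConjugate ComplexOrder

/-- The nonlinear embedding `Φ(λ) = (√2·λ, λ²)`. -/
noncomputable def PhiMap (l : ℂ) : Fin 2 → ℂ := ![(Real.sqrt 2 : ℂ) * l, l ^ 2]

private lemma sqrt2_sq : ((Real.sqrt 2 : ℝ) : ℂ) * ((Real.sqrt 2 : ℝ) : ℂ) = 2 := by
  rw [← Complex.ofReal_mul, Real.mul_self_sqrt (by norm_num)]; norm_num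

private theorem key_id (z w t u : ℂ) (h1 : (1:ℂ) - t*z ≠ 0) (h2 : (1:ℂ) - w*u ≠ 0)
    (h3 : (2:ℂ) - w*t ≠ 0) (hw : w ≠ 0) (ht : t ≠ 0) :
    2*((z-w)/(1-t*z)*((u-t)/(1-w*u))) - ((z-w)/(1-t*z)*((u-t)/(1-w*u)))^2
    = 2*(((1 - (2*t*z - t^2*z^2))⁻¹ * (w - (2*t*z - t^2*z^2)/(2*w*t - w^2*t^2)*w
        - (1 - w*t)*(z - (2*t*z - t^2*z^2)/(2*w*t - w^2*t^2)*w)))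
      * ((1 - (2*w*u - w^2*u^2))⁻¹ * (t - (2*w*u - w^2*u^2)/(2*w*t - w^2*t^2)*t
        - (1 - w*t)*(u - (2*w*u - w^2*u^2)/(2*w*t - w^2*t^2)*t))))
    - ((1 - (2*t*z - t^2*z^2))⁻¹ * (w^2 - (2*t*z - t^2*z^2)/(2*w*t - w^2*t^2)*w^2
        - (1 - w*t)*(z^2 - (2*t*z - t^2*z^2)/(2*w*t - w^2*t^2)*w^2)))
      * ((1 - (2*w*u - w^2*u^2))⁻¹ * (t^2 - (2*w*u - w^2*u^2)/(2*w*t - w^2*t^2)*t^2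
        - (1 - w*t)*(u^2 - (2*w*u - w^2*u^2)/(2*w*t - w^2*t^2)*t^2))) := by
  have e1 : (1:ℂ) - (2*t*z - t^2*z^2) = (1 - t*z)^2 := by ring
  have e2 : (1:ℂ) - (2*w*u - w^2*u^2) = (1 - w*u)^2 := by ring
  have hD : (2:ℂ)*w*t - w^2*t^2 ≠ 0 := by
    have h : (2:ℂ)*w*t - w^2*t^2 = w*t*(2 - w*t) := by ring
    rw [h]; exact mul_ne_zero (mul_ne_zero hw ht) h3
  rw [e1, e2]
  have h1' : ((1:ℂ) - t*z)^2 ≠ 0 := pow_ne_zero _ h1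
  have h2' : ((1:ℂ) - w*u)^2 ≠ 0 := pow_ne_zero _ h2
  field_simp
  ring

private theorem lhs_eq (z w : ℂ) (hz : ‖z‖ < 1) (hw : ‖w‖ < 1) :
    ((rho z w : ℂ)) ^ 2 =
      2 * ((z - w) / (1 - conj w * z) * ((conj z - conj w) / (1 - w * conj z)))
      - ((z - w) / (1 - conj w * z) * ((conj z - conj w) / (1 - w * conj z))) ^ 2 := by
  have hz2 : Complex.normSq z < 1 := by
    rw [← Complex.sq_norm] at *; nlinarith [norm_nonneg z]
  have hw2 : Complex.normSq w < 1 := by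
    rw [← Complex.sq_norm] at *; nlinarith [norm_nonneg w]
  have hkey : Complex.normSq (1 - conj w * z) - Complex.normSq (z - w)
      = (1 - Complex.normSq z) * (1 - Complex.normSq w) := by
    simp [Complex.normSq_apply, Complex.sub_re, Complex.sub_im, Complex.mul_re, Complex.mul_im,
      Complex.conj_re, Complex.conj_im, Complex.one_re, Complex.one_im]
    ring
  have hlt : Complex.normSq (z - w) < Complex.normSq (1 - conj w * z) := by nlinarith
  have habs : ‖(z - w) / (1 - conj w * z)‖ ^ 2 < 1 := by
    rw [Complex.sq_norm, Complex.normSq_div]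
    rw [div_lt_one (by nlinarith [Complex.normSq_nonneg (z - w)])]
    exact hlt
  have h0 : (0:ℝ) ≤ 2 * ‖(z - w) / (1 - conj w * z)‖ ^ 2
      - ‖(z - w) / (1 - conj w * z)‖ ^ 4 := by
    nlinarith [sq_nonneg (‖(z - w) / (1 - conj w * z)‖)]
  rw [rho, ← Complex.ofReal_pow, Real.sq_sqrt h0]
  have hq : ((‖(z - w) / (1 - conj w * z)‖ ^ 2 : ℝ) : ℂ)
      = (z - w) / (1 - conj w * z) * ((conj z - conj w) / (1 - w * conj z)) := by
    rw [Complex.sq_norm, ← Complex.mul_conj]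
    simp [map_div₀, map_sub, Complex.conj_conj]
  rw [show (2 * ‖(z - w) / (1 - conj w * z)‖ ^ 2
      - ‖(z - w) / (1 - conj w * z)‖ ^ 4 : ℝ)
      = 2 * (‖(z - w) / (1 - conj w * z)‖ ^ 2)
        - (‖(z - w) / (1 - conj w * z)‖ ^ 2) ^ 2 from by ring]
  have hq2 : ((((‖(z - w) / (1 - conj w * z)‖) ^ 2) ^ 2 : ℝ) : ℂ)
      = ((z - w) / (1 - conj w * z) * ((conj z - conj w) / (1 - w * conj z))) ^ 2 := by
    rw [Complex.ofReal_pow, hq]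
  rw [Complex.ofReal_sub, Complex.ofReal_mul, hq2, hq, Complex.ofReal_ofNat]

set_option maxHeartbeats 1600000 in
/-- `ρ(z,w)² = ⟨φ_{Φ(w)}(Φ(z)), φ_{Φ(w)}(Φ(z))⟩_K`. -/
theorem rho_sq_eq_Kip_phiK (z w : ℂ)
    (hz : ‖z‖ < 1) (hw : ‖w‖ < 1) :
    ((rho z w : ℂ)) ^ 2 = Kip (phiK (PhiMap w) (PhiMap z)) (phiK (PhiMap w) (PhiMap z)) := by
  rw [lhs_eq z w hz hw]
  have hz2 : Complex.normSq z < 1 := by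
    rw [← Complex.sq_norm] at *; nlinarith [norm_nonneg z]
  have hw2 : Complex.normSq w < 1 := by
    rw [← Complex.sq_norm] at *; nlinarith [norm_nonneg w]
  by_cases hw0 : w = 0
  · subst hw0
    have h0 : PhiMap (0:ℂ) = 0 := by
      funext i; fin_cases i <;> simp [PhiMap]
    rw [h0]
    simp only [phiK, eq_self_iff_true, if_true]
    simp only [Kip, PhiMap, Pi.neg_apply, Matrix.cons_val_zero, Matrix.cons_val_one,
      Matrix.head_cons, map_neg, map_mul, map_pow, Complex.conj_ofReal, map_zero, sub_zero,
      mul_zero, zero_mul, mul_one, div_one, mul_neg, neg_mul, neg_neg]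
    linear_combination (-(z * conj z)) * sqrt2_sq
  · have ha : PhiMap w ≠ 0 := by
      intro h
      apply hw0
      have h0 := congrFun h 0
      simp only [PhiMap, Matrix.cons_val_zero, Pi.zero_apply, mul_eq_zero] at h0
      rcases h0 with h0 | h0
      · exact absurd (Complex.ofReal_eq_zero.mp h0)
          (by positivity)
      · exact h0
    have ht : conj w ≠ 0 := by simpa using hw0
    have h1 : (1:ℂ) - conj w * z ≠ 0 := by
      intro h
      have e : conj w * z = 1 := by linear_combination -h
      have hlt : ‖conj w * z‖ < 1 := by
        rw [norm_mul, Complex.norm_conj]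
        nlinarith [norm_nonneg z, norm_nonneg w]
      rw [e, norm_one] at hlt
      exact lt_irrefl 1 hlt
    have h2 : (1:ℂ) - w * conj z ≠ 0 := by
      intro h
      apply h1
      have h' := congrArg (starRingEnd ℂ) h
      simpa [map_sub, map_mul, Complex.conj_conj] using h'
    have h3 : (2:ℂ) - w * conj w ≠ 0 := by
      rw [Complex.mul_conj,
        show (2:ℂ) - (Complex.normSq w : ℂ) = ((2 - Complex.normSq w : ℝ) : ℂ) from by
          push_cast; ring,
        Ne, Complex.ofReal_eq_zero]
      nlinarith [Complex.normSq_nonneg w]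
    have hKza : Kip (PhiMap z) (PhiMap w) = 2*conj w*z - (conj w)^2*z^2 := by
      simp only [Kip, PhiMap, Matrix.cons_val_zero, Matrix.cons_val_one, Matrix.head_cons,
        map_mul, map_pow, Complex.conj_ofReal]
      linear_combination (z * conj w) * sqrt2_sq
    have hKaa : Kip (PhiMap w) (PhiMap w) = 2*w*conj w - w^2*(conj w)^2 := by
      simp only [Kip, PhiMap, Matrix.cons_val_zero, Matrix.cons_val_one, Matrix.head_cons,
        map_mul, map_pow, Complex.conj_ofReal]
      linear_combination (w * conj w) * sqrt2_sq
    have hre : (Kip (PhiMap w) (PhiMap w)).re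
        = 2 * Complex.normSq w - Complex.normSq w ^ 2 := by
      rw [show Kip (PhiMap w) (PhiMap w)
          = ((2 * Complex.normSq w - Complex.normSq w ^ 2 : ℝ) : ℂ) from by
        rw [hKaa, show (2:ℂ)*w*conj w - w^2*(conj w)^2 = 2*(w*conj w) - (w*conj w)^2 from by
          ring, Complex.mul_conj]
        push_cast; ring]
      exact Complex.ofReal_re _
    have hs : ((Real.sqrt (1 - (Kip (PhiMap w) (PhiMap w)).re) : ℝ) : ℂ) = 1 - w * conj w := by
      rw [hre, show (1 - (2 * Complex.normSq w - Complex.normSq w ^ 2) : ℝ)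
          = (1 - Complex.normSq w)^2 from by ring,
        Real.sqrt_sq (by nlinarith [Complex.normSq_nonneg w]),
        Complex.ofReal_sub, Complex.ofReal_one, ← Complex.mul_conj]
    simp only [phiK, if_neg ha]
    rw [hs, hKza, hKaa]
    simp only [Kip, Pi.smul_apply, Pi.sub_apply, smul_eq_mul, PhiMap, Matrix.cons_val_zero,
      Matrix.cons_val_one, Matrix.head_cons, map_mul, map_sub, map_div₀, map_inv₀, map_pow,
      map_one, map_ofNat, Complex.conj_conj, Complex.conj_ofReal]
    rw [show (2:ℂ) * conj w * w - (conj w)^2 * w^2 = 2*w*conj w - w^2*(conj w)^2 from by ring]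
    rw [show (1:ℂ) - conj w * w = 1 - w * conj w from by ring]
    linear_combination key_id z w (conj w) (conj z) h1 h2 h3 hw0 ht
      - (((1 - (2*conj w*z - (conj w)^2*z^2))⁻¹
          * (w - (2*conj w*z - (conj w)^2*z^2)/(2*w*conj w - w^2*(conj w)^2)*w
            - (1 - w*conj w)*(z - (2*conj w*z - (conj w)^2*z^2)/(2*w*conj w - w^2*(conj w)^2)*w)))
        * ((1 - (2*w*conj z - w^2*(conj z)^2))⁻¹
          * (conj w - (2*w*conj z - w^2*(conj z)^2)/(2*w*conj w - w^2*(conj w)^2)*conj w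
            - (1 - w*conj w)*(conj z
              - (2*w*conj z - w^2*(conj z)^2)/(2*w*conj w - w^2*(conj w)^2)*conj w))))
        * sqrt2_sq
end

section
/- For all z = (z₁,z₂) and λ = (λ₁,λ₂) in 𝔹₂, the double series defining K₊(z,λ) and K₋(z,λ) converge absolutely, and K₊(z,λ) − K₋(z,λ) = 1/(1 − (z₁·conj(λ₁) − z₂·conj(λ₂))); moreover Σ_{n=0}^∞ (|z₁·conj(λ₁)| + |z₂·conj(λ₂)|)^n < ∞. -/
open Complex ComplexConjugate ComplexOrder

/-- The open unit ball `𝔹₂ = {(z₁,z₂) : |z₁|² + |z₂|² < 1}` in ℂ². -/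
def Ball2 : Set (ℂ × ℂ) :=
  {z | ‖z.1‖ ^ 2 + ‖z.2‖ ^ 2 < 1}

/-- `K₊(z,λ) = Σₙ Σ_{ℓ=0}^{⌊n/2⌋} C(n,2ℓ)(z₁conj λ₁)^{n−2ℓ}(z₂conj λ₂)^{2ℓ}`. -/
noncomputable def Kplus (z l : ℂ × ℂ) : ℂ :=
  ∑' n : ℕ, ∑ k ∈ Finset.range (n / 2 + 1),
    (n.choose (2 * k) : ℂ) * (z.1 * conj l.1) ^ (n - 2 * k) * (z.2 * conj l.2) ^ (2 * k)

/-- `K₋(z,λ) = Σ_{n≥1} Σ_{ℓ=1}^{⌈n/2⌉} C(n,2ℓ−1)(z₁conj λ₁)^{n−2ℓ+1}(z₂conj λ₂)^{2ℓ−1}`. -/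
noncomputable def Kminus (z l : ℂ × ℂ) : ℂ :=
  ∑' n : ℕ, ∑ k ∈ Finset.Icc 1 ((n + 1) / 2),
    (n.choose (2 * k - 1) : ℂ) * (z.1 * conj l.1) ^ (n + 1 - 2 * k) * (z.2 * conj l.2) ^ (2 * k - 1)

lemma sum_even_reindex {M : Type*} [AddCommMonoid M] (n : ℕ) (F : ℕ → M) :
    ∑ j ∈ (Finset.range (n + 1)).filter (fun j => j % 2 = 0), F j
      = ∑ k ∈ Finset.range (n / 2 + 1), F (2 * k) := by
  refine (Finset.sum_nbij' (fun k => 2 * k) (fun j => j / 2) ?_ ?_ ?_ ?_ ?_).symm <;>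
    intro x hx <;> simp only [Finset.mem_filter, Finset.mem_range] at hx ⊢ <;> omega

lemma sum_odd_reindex {M : Type*} [AddCommMonoid M] (n : ℕ) (F : ℕ → M) :
    ∑ j ∈ (Finset.range (n + 1)).filter (fun j => ¬ j % 2 = 0), F j
      = ∑ k ∈ Finset.Icc 1 ((n + 1) / 2), F (2 * k - 1) := by
  refine (Finset.sum_nbij' (fun k => 2 * k - 1) (fun j => (j + 1) / 2) ?_ ?_ ?_ ?_ ?_).symm <;>
    intro x hx <;> simp only [Finset.mem_filter, Finset.mem_range, Finset.mem_Icc] at hx ⊢ <;>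
    omega

/-- On `𝔹₂`, the series defining `K₊` and `K₋` converge absolutely,
`K₊ − K₋ = 1/(1 − (z₁conj λ₁ − z₂conj λ₂))`, and the geometric majorant
`Σₙ (|z₁conj λ₁| + |z₂conj λ₂|)ⁿ` converges. -/
theorem Kplus_sub_Kminus (z l : ℂ × ℂ) (hz : z ∈ Ball2) (hl : l ∈ Ball2) :
    Summable (fun n : ℕ => ∑ k ∈ Finset.range (n / 2 + 1),
      ‖(n.choose (2 * k) : ℂ) * (z.1 * conj l.1) ^ (n - 2 * k)
        * (z.2 * conj l.2) ^ (2 * k)‖) ∧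
    Summable (fun n : ℕ => ∑ k ∈ Finset.Icc 1 ((n + 1) / 2),
      ‖(n.choose (2 * k - 1) : ℂ) * (z.1 * conj l.1) ^ (n + 1 - 2 * k)
        * (z.2 * conj l.2) ^ (2 * k - 1)‖) ∧
    Kplus z l - Kminus z l = 1 / (1 - (z.1 * conj l.1 - z.2 * conj l.2)) ∧
    Summable (fun n : ℕ =>
      (‖z.1 * conj l.1‖ + ‖z.2 * conj l.2‖) ^ n) := by
  set a : ℂ := z.1 * conj l.1 with ha
  set b : ℂ := z.2 * conj l.2 with hb
  have hz' : ‖z.1‖ ^ 2 + ‖z.2‖ ^ 2 < 1 := hz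
  have hl' : ‖l.1‖ ^ 2 + ‖l.2‖ ^ 2 < 1 := hl
  have habs_a : ‖a‖ = ‖z.1‖ * ‖l.1‖ := by
    simp [ha, norm_mul]
  have habs_b : ‖b‖ = ‖z.2‖ * ‖l.2‖ := by
    simp [hb, norm_mul]
  set r : ℝ := ‖a‖ + ‖b‖ with hr
  have hr0 : 0 ≤ r := by positivity
  have hr1 : r < 1 := by
    rw [hr, habs_a, habs_b]
    nlinarith [sq_nonneg (‖z.1‖ - ‖l.1‖),
      sq_nonneg (‖z.2‖ - ‖l.2‖)]
  have hgeom : Summable (fun n : ℕ => r ^ n) := summable_geometric_of_lt_one hr0 hr1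
  -- the full binomial majorant
  have hfull : ∀ n : ℕ, ∑ j ∈ Finset.range (n + 1),
      (n.choose j : ℝ) * ‖a‖ ^ (n - j) * ‖b‖ ^ j = r ^ n := by
    intro n
    rw [hr, add_comm (‖a‖), add_pow]
    exact Finset.sum_congr rfl fun j hj => by ring
  have hterm : ∀ n j : ℕ, (0:ℝ) ≤ (n.choose j : ℝ) * ‖a‖ ^ (n - j)
      * ‖b‖ ^ j := fun n j => by positivity
  -- bounds for the even part
  have heven : ∀ n : ℕ, ∑ k ∈ Finset.range (n / 2 + 1),
      ‖(n.choose (2 * k) : ℂ) * a ^ (n - 2 * k) * b ^ (2 * k)‖ ≤ r ^ n := by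
    intro n
    have : ∑ k ∈ Finset.range (n / 2 + 1),
        ‖(n.choose (2 * k) : ℂ) * a ^ (n - 2 * k) * b ^ (2 * k)‖
        = ∑ j ∈ (Finset.range (n + 1)).filter (fun j => j % 2 = 0),
          (n.choose j : ℝ) * ‖a‖ ^ (n - j) * ‖b‖ ^ j := by
      rw [sum_even_reindex n (fun j => (n.choose j : ℝ) * ‖a‖ ^ (n - j)
        * ‖b‖ ^ j)]
      exact Finset.sum_congr rfl fun k _ => by
        simp [norm_mul, norm_pow, Complex.norm_natCast]
    rw [this, ← hfull n]
    exact Finset.sum_le_sum_of_subset_of_nonneg (Finset.filter_subset _ _)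
      fun j hj _ => hterm n j
  have hodd : ∀ n : ℕ, ∑ k ∈ Finset.Icc 1 ((n + 1) / 2),
      ‖(n.choose (2 * k - 1) : ℂ) * a ^ (n + 1 - 2 * k) * b ^ (2 * k - 1)‖
        ≤ r ^ n := by
    intro n
    have : ∑ k ∈ Finset.Icc 1 ((n + 1) / 2),
        ‖(n.choose (2 * k - 1) : ℂ) * a ^ (n + 1 - 2 * k) * b ^ (2 * k - 1)‖
        = ∑ j ∈ (Finset.range (n + 1)).filter (fun j => ¬ j % 2 = 0),
          (n.choose j : ℝ) * ‖a‖ ^ (n - j) * ‖b‖ ^ j := by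
      rw [sum_odd_reindex n (fun j => (n.choose j : ℝ) * ‖a‖ ^ (n - j)
        * ‖b‖ ^ j)]
      refine Finset.sum_congr rfl fun k hk => ?_
      simp only [Finset.mem_Icc] at hk
      have h1 : n - (2 * k - 1) = n + 1 - 2 * k := by omega
      rw [h1]
      simp [norm_mul, norm_pow, Complex.norm_natCast]
    rw [this, ← hfull n]
    exact Finset.sum_le_sum_of_subset_of_nonneg (Finset.filter_subset _ _)
      fun j hj _ => hterm n j
  have hS1 : Summable (fun n : ℕ => ∑ k ∈ Finset.range (n / 2 + 1),
      ‖(n.choose (2 * k) : ℂ) * a ^ (n - 2 * k) * b ^ (2 * k)‖) :=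
    Summable.of_nonneg_of_le (fun n => Finset.sum_nonneg fun k _ => norm_nonneg _)
      heven hgeom
  have hS2 : Summable (fun n : ℕ => ∑ k ∈ Finset.Icc 1 ((n + 1) / 2),
      ‖(n.choose (2 * k - 1) : ℂ) * a ^ (n + 1 - 2 * k) * b ^ (2 * k - 1)‖) :=
    Summable.of_nonneg_of_le (fun n => Finset.sum_nonneg fun k _ => norm_nonneg _)
      hodd hgeom
  refine ⟨hS1, hS2, ?_, hgeom⟩
  -- main identity
  set f : ℕ → ℂ := fun n => ∑ k ∈ Finset.range (n / 2 + 1),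
    (n.choose (2 * k) : ℂ) * a ^ (n - 2 * k) * b ^ (2 * k) with hf
  set g : ℕ → ℂ := fun n => ∑ k ∈ Finset.Icc 1 ((n + 1) / 2),
    (n.choose (2 * k - 1) : ℂ) * a ^ (n + 1 - 2 * k) * b ^ (2 * k - 1) with hg
  have hSf : Summable f := by
    refine Summable.of_norm_bounded hgeom fun n => ?_
    calc ‖f n‖ ≤ ∑ k ∈ Finset.range (n / 2 + 1),
        ‖(n.choose (2 * k) : ℂ) * a ^ (n - 2 * k) * b ^ (2 * k)‖ :=
          norm_sum_le _ _
      _ ≤ r ^ n := heven n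
  have hSg : Summable g := by
    refine Summable.of_norm_bounded hgeom fun n => ?_
    calc ‖g n‖ ≤ ∑ k ∈ Finset.Icc 1 ((n + 1) / 2),
        ‖(n.choose (2 * k - 1) : ℂ) * a ^ (n + 1 - 2 * k) * b ^ (2 * k - 1)‖ :=
          norm_sum_le _ _
      _ ≤ r ^ n := hodd n
  have hdiff : ∀ n : ℕ, f n - g n = (a - b) ^ n := by
    intro n
    have hpow : (a - b) ^ n = ∑ j ∈ Finset.range (n + 1),
        (a ^ (n - j) * (-b) ^ j) * (n.choose j : ℂ) := by
      rw [sub_eq_add_neg, add_comm, add_pow]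
      exact Finset.sum_congr rfl fun j _ => by ring
    rw [hpow, ← Finset.sum_filter_add_sum_filter_not (Finset.range (n + 1))
      (fun j => j % 2 = 0)]
    rw [sum_even_reindex n (fun j => a ^ (n - j) * (-b) ^ j * (n.choose j : ℂ)),
      sum_odd_reindex n (fun j => a ^ (n - j) * (-b) ^ j * (n.choose j : ℂ))]
    have he : ∑ k ∈ Finset.range (n / 2 + 1),
        a ^ (n - 2 * k) * (-b) ^ (2 * k) * (n.choose (2 * k) : ℂ) = f n := by
      refine Finset.sum_congr rfl fun k _ => ?_
      rw [Even.neg_pow ⟨k, by ring⟩]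
      ring
    have ho : ∑ k ∈ Finset.Icc 1 ((n + 1) / 2),
        a ^ (n - (2 * k - 1)) * (-b) ^ (2 * k - 1) * (n.choose (2 * k - 1) : ℂ) = -g n := by
      rw [hg, ← Finset.sum_neg_distrib]
      refine Finset.sum_congr rfl fun k hk => ?_
      simp only [Finset.mem_Icc] at hk
      have h1 : n - (2 * k - 1) = n + 1 - 2 * k := by omega
      rw [h1, Odd.neg_pow ⟨k - 1, by omega⟩]
      ring
    rw [he, ho]
    ring
  have hab : ‖a - b‖ < 1 := lt_of_le_of_lt (norm_sub_le a b) hr1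
  have hgeo : ∑' n : ℕ, (a - b) ^ n = (1 - (a - b))⁻¹ :=
    tsum_geometric_of_norm_lt_one hab
  have : Kplus z l - Kminus z l = ∑' n : ℕ, (f n - g n) := (Summable.tsum_sub hSf hSg).symm
  rw [this]
  rw [tsum_congr hdiff, hgeo, one_div]
end

section
/- Let λ₁ and λ₂ be two distinct points of 𝔻 and let ω₁, ω₂ ∈ 𝔻. Then the matrix M_Φ(λ₁,λ₂;ω₁,ω₂) is positive semi-definite if and only if there exists a holomorphic function f on 𝔻 with sup_{λ∈𝔻}|f(λ)| ≤ 1 such that f(λ₁) = ω₁ and f(λ₂) = ω₂. -/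
open Complex ComplexConjugate ComplexOrder Metric

noncomputable def mob (a z : ℂ) : ℂ := (z - a) / (1 - conj a * z)

lemma normSq_one_sub_mul_conj (a b : ℂ) :
    normSq (1 - a * conj b) = normSq (a - b) + (1 - normSq a) * (1 - normSq b) := by
  simp only [normSq_apply, Complex.sub_re, Complex.sub_im, Complex.mul_re, Complex.mul_im,
    Complex.one_re, Complex.one_im, Complex.conj_re, Complex.conj_im]
  ring

lemma normSq_lt_one_s14 {a : ℂ} (ha : ‖a‖ < 1) : normSq a < 1 := by
  nlinarith [Complex.sq_norm a, norm_nonneg a]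

lemma denom_ne {a z : ℂ} (ha : ‖a‖ < 1) (hz : ‖z‖ ≤ 1) :
    1 - conj a * z ≠ 0 := by
  intro h
  have h1 : (1 : ℂ) = conj a * z := by linear_combination h
  have := congrArg (‖·‖) h1
  simp only [norm_one, norm_mul, Complex.norm_conj] at this
  nlinarith [norm_nonneg a, norm_nonneg z]

lemma mob_abs_lt {a z : ℂ} (ha : ‖a‖ < 1) (hz : ‖z‖ < 1) :
    ‖mob a z‖ < 1 := by
  have hden : 1 - conj a * z ≠ 0 := denom_ne ha hz.le
  have hlt : normSq (z - a) < normSq (1 - z * conj a) := by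
    rw [normSq_one_sub_mul_conj]
    nlinarith [normSq_nonneg (z - a), normSq_lt_one_s14 ha, normSq_lt_one_s14 hz,
      normSq_nonneg a, normSq_nonneg z]
  have h2 : ‖z - a‖ < ‖1 - conj a * z‖ := by
    rw [Complex.norm_def, Complex.norm_def]
    have h3 : (1 : ℂ) - conj a * z = 1 - z * conj a := by ring
    rw [h3]
    exact Real.sqrt_lt_sqrt (normSq_nonneg _) hlt
  rw [mob, norm_div, div_lt_one (norm_pos_iff.2 hden)]
  exact h2

lemma mob_self (a : ℂ) : mob a a = 0 := by simp [mob]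

lemma mob_inv {a z : ℂ} (ha : ‖a‖ < 1) (hz : ‖z‖ < 1) :
    mob (-a) (mob a z) = z := by
  have hden : 1 - conj a * z ≠ 0 := denom_ne ha hz.le
  have hden2 : 1 - conj (-a) * mob a z ≠ 0 :=
    denom_ne (by simpa using ha) (mob_abs_lt ha hz).le
  have hna : 1 - conj a * a ≠ 0 := denom_ne ha ha.le
  rw [mob, div_eq_iff hden2]
  rw [mob] at hden2 ⊢
  have hden' : 1 - z * conj a ≠ 0 := by rwa [mul_comm]
  field_simp at hden2 ⊢
  simp only [map_neg]
  ring_nf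

lemma cross_iff {A B C D : ℝ} : (B - A) * D ≤ (D - C) * B ↔ B * C ≤ A * D := by
  constructor <;> intro h <;> nlinarith

lemma mem_ball_iff_abs {z : ℂ} : z ∈ ball (0:ℂ) 1 ↔ ‖z‖ < 1 := by
  simp [mem_ball_zero_iff]

lemma abs_lt_one_of_le {f : ℂ → ℂ} (hd : DifferentiableOn ℂ f (ball 0 1))
    (hb : ∀ z ∈ ball (0:ℂ) 1, ‖f z‖ ≤ 1)
    {l w : ℂ} (hl : ‖l‖ < 1) (hw : ‖w‖ < 1) (hfl : f l = w) :
    ∀ z ∈ ball (0:ℂ) 1, ‖f z‖ < 1 := by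
  intro z hz
  rcases lt_or_eq_of_le (hb z hz) with h | h
  · exact h
  · exfalso
    have hmax : IsMaxOn (norm ∘ f) (ball (0:ℂ) 1) z := by
      intro y hy
      simp only [Function.comp_apply, Set.mem_setOf_eq, h]
      exact hb y hy
    have := Complex.eqOn_of_isPreconnected_of_isMaxOn_norm
      (convex_ball (0:ℂ) 1).isPreconnected isOpen_ball hd hz hmax
      (mem_ball_iff_abs.2 hl)
    rw [Function.const_apply, hfl] at this
    rw [← this] at h
    linarith

lemma schwarz_pick {f : ℂ → ℂ} (hd : DifferentiableOn ℂ f (ball 0 1))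
    (hb : ∀ z ∈ ball (0:ℂ) 1, ‖f z‖ ≤ 1)
    {l1 l2 w1 w2 : ℂ} (hl1 : ‖l1‖ < 1) (hl2 : ‖l2‖ < 1)
    (hw1 : ‖w1‖ < 1)
    (hf1 : f l1 = w1) (hf2 : f l2 = w2) :
    ‖mob w1 w2‖ ≤ ‖mob l1 l2‖ := by
  have hstrict := abs_lt_one_of_le hd hb hl1 hw1 hf1
  set g : ℂ → ℂ := fun z => mob w1 (f (mob (-l1) z)) with hg
  have hml1 : ∀ z ∈ ball (0:ℂ) 1, ‖mob (-l1) z‖ < 1 := fun z hz =>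
    mob_abs_lt (by simpa using hl1) (mem_ball_iff_abs.1 hz)
  have hgd : DifferentiableOn ℂ g (ball 0 1) := by
    have h1 : DifferentiableOn ℂ (fun z => mob (-l1) z) (ball 0 1) := by
      apply DifferentiableOn.div
      · fun_prop
      · fun_prop
      · intro z hz
        exact denom_ne (by simpa using hl1) (mem_ball_iff_abs.1 hz).le
    have h2 : DifferentiableOn ℂ (fun z => f (mob (-l1) z)) (ball 0 1) := by
      apply hd.comp h1
      intro z hz
      exact mem_ball_iff_abs.2 (hml1 z hz)
    apply DifferentiableOn.div
    · exact h2.sub (differentiableOn_const _)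
    · exact (differentiableOn_const _).sub ((differentiableOn_const _).mul h2)
    · intro z hz
      exact denom_ne hw1 (hb _ (mem_ball_iff_abs.2 (hml1 z hz)))
  have hgm : Set.MapsTo g (ball (0:ℂ) 1) (ball (0:ℂ) 1) := by
    intro z hz
    exact mem_ball_iff_abs.2 (mob_abs_lt hw1 (hstrict _ (mem_ball_iff_abs.2 (hml1 z hz))))
  have hg0 : g 0 = 0 := by
    have : mob (-l1) 0 = l1 := by simp [mob]
    rw [hg]; simp only [this, hf1, mob_self]
  have hzmem : mob l1 l2 ∈ ball (0:ℂ) 1 := mem_ball_iff_abs.2 (mob_abs_lt hl1 hl2)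
  have key := Complex.norm_le_norm_of_mapsTo_ball hgd (hgm.mono_right ball_subset_closedBall) hg0 (mem_ball_zero_iff.1 hzmem)
  have : g (mob l1 l2) = mob w1 w2 := by
    rw [hg]
    simp only [mob_inv hl1 hl2, hf2]
  rwa [this] at key

lemma posSemidef_fin_two {a d : ℝ} (b : ℂ) (ha : 0 < a) (hd : 0 < d) :
    (Matrix.of ![![(a : ℂ), b], ![conj b, (d : ℂ)]]).PosSemidef ↔ normSq b ≤ a * d := by
  constructor
  · intro h
    have hq := h.dotProduct_mulVec_nonneg ![-b, (a : ℂ)]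
    simp only [Matrix.mulVec, dotProduct, Fin.sum_univ_two, Pi.star_apply,
      Matrix.of_apply, Matrix.cons_val', Matrix.cons_val_zero, Matrix.cons_val_one,
      Matrix.head_cons, Matrix.empty_val', Matrix.cons_val_fin_one, Matrix.head_fin_const,
      RCLike.star_def] at hq
    rw [show ((starRingEnd ℂ) (-b) * ((a:ℂ) * -b + b * (a:ℂ)) +
        (starRingEnd ℂ) (a:ℂ) * ((starRingEnd ℂ) b * -b + (d:ℂ) * (a:ℂ)))
      = ((a:ℝ) * ((a:ℝ)*(d:ℝ) - normSq b) : ℝ) by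
        rw [Complex.ofReal_mul, Complex.ofReal_sub, ← Complex.mul_conj, Complex.conj_ofReal]
        push_cast; ring] at hq
    rw [Complex.zero_le_real] at hq
    nlinarith [hq]
  · intro h
    apply Matrix.PosSemidef.of_dotProduct_mulVec_nonneg
    · ext i j
      fin_cases i <;> fin_cases j <;>
        simp [Matrix.conjTranspose_apply, Complex.conj_ofReal]
    · intro x
      simp only [Matrix.mulVec, dotProduct, Fin.sum_univ_two, Pi.star_apply,
        Matrix.of_apply, Matrix.cons_val', Matrix.cons_val_zero, Matrix.cons_val_one,
        Matrix.head_cons, Matrix.empty_val', Matrix.cons_val_fin_one, Matrix.head_fin_const,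
        RCLike.star_def]
      set Q : ℂ := conj (x 0) * ((a:ℂ) * x 0 + b * x 1) + conj (x 1) * (conj b * x 0 + (d:ℂ) * x 1)
        with hQ
      rw [Complex.le_def]
      constructor
      · have key : a * Q.re = normSq ((a:ℂ) * x 0 + b * x 1) + (a * d - normSq b) * normSq (x 1) := by
          rw [hQ]
          simp only [normSq_apply, Complex.add_re, Complex.add_im, Complex.mul_re, Complex.mul_im,
            Complex.conj_re, Complex.conj_im, Complex.ofReal_re, Complex.ofReal_im]
          ring
        have h1 : 0 ≤ a * Q.re := by
          rw [key]
          have := normSq_nonneg ((a:ℂ) * x 0 + b * x 1)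
          have := normSq_nonneg (x 1)
          nlinarith
        simpa using nonneg_of_mul_nonneg_right h1 ha
      · rw [hQ]
        simp only [Complex.add_im, Complex.mul_im, Complex.mul_re, Complex.add_re,
          Complex.conj_re, Complex.conj_im, Complex.ofReal_re, Complex.ofReal_im, Complex.zero_im]
        ring

set_option maxHeartbeats 2000000 in
/-- Modified two-point interpolation: `M_Φ(λ₁,λ₂;ω₁,ω₂)` is positive semi-definite
iff the two-point Pick problem `λⱼ ↦ ωⱼ` is solvable in the Schur class. -/
theorem MPhi_posSemidef_iff_pick_solvable (l1 l2 w1 w2 : ℂ)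
    (hl1 : ‖l1‖ < 1) (hl2 : ‖l2‖ < 1) (hne : l1 ≠ l2)
    (hw1 : ‖w1‖ < 1) (hw2 : ‖w2‖ < 1) :
    (Matrix.of fun i j : Fin 2 =>
        (1 - ![w1, w2] i * conj (![w1, w2] j)) ^ 2 /
          (1 - ![l1, l2] i * conj (![l1, l2] j)) ^ 2).PosSemidef
      ↔ ∃ f : ℂ → ℂ, DifferentiableOn ℂ f {z : ℂ | ‖z‖ < 1}
          ∧ (∀ z : ℂ, ‖z‖ < 1 → ‖f z‖ ≤ 1)
          ∧ f l1 = w1 ∧ f l2 = w2 := by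
  have hset : {z : ℂ | ‖z‖ < 1} = ball (0:ℂ) 1 := by
    ext z; simp [mem_ball_zero_iff]
  -- real constants
  set nw1 := normSq w1 with hnw1
  set nw2 := normSq w2 with hnw2
  set nl1 := normSq l1 with hnl1
  set nl2 := normSq l2 with hnl2
  have hnw1' : nw1 < 1 := normSq_lt_one_s14 hw1
  have hnw2' : nw2 < 1 := normSq_lt_one_s14 hw2
  have hnl1' : nl1 < 1 := normSq_lt_one_s14 hl1
  have hnl2' : nl2 < 1 := normSq_lt_one_s14 hl2
  have hnw1n : 0 ≤ nw1 := normSq_nonneg _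
  have hnw2n : 0 ≤ nw2 := normSq_nonneg _
  have hnl1n : 0 ≤ nl1 := normSq_nonneg _
  have hnl2n : 0 ≤ nl2 := normSq_nonneg _
  set A := (1 - nw1) * (1 - nw2) with hA
  set C := (1 - nl1) * (1 - nl2) with hC
  set B := normSq (1 - w1 * conj w2) with hB
  set D := normSq (1 - l1 * conj l2) with hD
  have hApos : 0 < A := by rw [hA]; nlinarith
  have hCpos : 0 < C := by rw [hC]; nlinarith
  have hBA : B = normSq (w1 - w2) + A := by
    rw [hB, hA, normSq_one_sub_mul_conj, hnw1, hnw2]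
  have hDC : D = normSq (l1 - l2) + C := by
    rw [hD, hC, normSq_one_sub_mul_conj, hnl1, hnl2]
  have hBpos : 0 < B := by rw [hBA]; nlinarith [normSq_nonneg (w1 - w2)]
  have hDpos : 0 < D := by rw [hDC]; nlinarith [normSq_nonneg (l1 - l2)]
  -- the key inequality
  have keyiff : (‖mob w1 w2‖ ≤ ‖mob l1 l2‖) ↔ B * C ≤ A * D := by
    have hmw : normSq (mob w1 w2) = normSq (w2 - w1) / B := by
      rw [mob, map_div₀, hB]
      congr 1
      rw [← normSq_conj (1 - w1 * conj w2)]
      congr 1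
      simp [map_sub, map_mul]
    have hml : normSq (mob l1 l2) = normSq (l2 - l1) / D := by
      rw [mob, map_div₀, hD]
      congr 1
      rw [← normSq_conj (1 - l1 * conj l2)]
      congr 1
      simp [map_sub, map_mul]
    have habs : (‖mob w1 w2‖ ≤ ‖mob l1 l2‖) ↔
        normSq (mob w1 w2) ≤ normSq (mob l1 l2) := by
      constructor
      · intro h
        nlinarith [Complex.sq_norm (mob w1 w2), Complex.sq_norm (mob l1 l2),
          norm_nonneg (mob w1 w2), norm_nonneg (mob l1 l2)]
      · intro h
        nlinarith [Complex.sq_norm (mob w1 w2), Complex.sq_norm (mob l1 l2),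
          norm_nonneg (mob w1 w2), norm_nonneg (mob l1 l2)]
    rw [habs, hmw, hml, div_le_div_iff₀ hBpos hDpos]
    have hw' : normSq (w2 - w1) = B - A := by
      rw [hBA]; rw [show w2 - w1 = -(w1 - w2) by ring, normSq_neg]; ring
    have hl' : normSq (l2 - l1) = D - C := by
      rw [hDC]; rw [show l2 - l1 = -(l1 - l2) by ring, normSq_neg]; ring
    rw [hw', hl']
    exact cross_iff
  -- matrix identification
  set a : ℝ := (1 - nw1)^2 / (1 - nl1)^2 with ha
  set d : ℝ := (1 - nw2)^2 / (1 - nl2)^2 with hd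
  set b : ℂ := (1 - w1 * conj w2)^2 / (1 - l1 * conj l2)^2 with hb
  have hMeq : (Matrix.of fun i j : Fin 2 =>
        (1 - ![w1, w2] i * conj (![w1, w2] j)) ^ 2 /
          (1 - ![l1, l2] i * conj (![l1, l2] j)) ^ 2)
      = Matrix.of ![![(a : ℂ), b], ![conj b, (d : ℂ)]] := by
    ext i j
    fin_cases i <;> fin_cases j
    · show (1 - w1 * conj w1) ^ 2 / (1 - l1 * conj l1) ^ 2 = (a : ℂ)
      rw [Complex.mul_conj, Complex.mul_conj, ha, hnw1, hnl1]
      push_cast; ring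
    · show (1 - w1 * conj w2) ^ 2 / (1 - l1 * conj l2) ^ 2 = b
      rw [hb]
    · show (1 - w2 * conj w1) ^ 2 / (1 - l2 * conj l1) ^ 2 = conj b
      rw [hb, map_div₀, map_pow, map_pow]
      simp only [map_sub, map_one, map_mul, Complex.conj_conj]
      ring_nf
    · show (1 - w2 * conj w2) ^ 2 / (1 - l2 * conj l2) ^ 2 = (d : ℂ)
      rw [Complex.mul_conj, Complex.mul_conj, hd, hnw2, hnl2]
      push_cast; ring
  have hapos : 0 < a := by
    rw [ha]; exact div_pos (pow_pos (by linarith) 2) (pow_pos (by linarith) 2)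
  have hdpos : 0 < d := by
    rw [hd]; exact div_pos (pow_pos (by linarith) 2) (pow_pos (by linarith) 2)
  have hnsb : normSq b = B^2 / D^2 := by
    rw [hb, map_div₀, map_pow, map_pow, hB, hD]
  have hadd : a * d = A^2 / C^2 := by
    rw [ha, hd, hA, hC, div_mul_div_comm, ← mul_pow, ← mul_pow]
  have hpsd : (Matrix.of fun i j : Fin 2 =>
        (1 - ![w1, w2] i * conj (![w1, w2] j)) ^ 2 /
          (1 - ![l1, l2] i * conj (![l1, l2] j)) ^ 2).PosSemidef
      ↔ ‖mob w1 w2‖ ≤ ‖mob l1 l2‖ := by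
    rw [hMeq, posSemidef_fin_two b hapos hdpos, hnsb, hadd, keyiff, ← div_pow, ← div_pow,
      pow_le_pow_iff_left₀ (by positivity) (by positivity) (two_ne_zero),
      div_le_div_iff₀ hDpos hCpos]
  rw [hpsd]
  constructor
  · -- construct the interpolant
    intro hK
    have hmlne : mob l1 l2 ≠ 0 := by
      rw [mob]
      exact div_ne_zero (sub_ne_zero.2 (Ne.symm hne)) (denom_ne hl1 hl2.le)
    set c : ℂ := mob w1 w2 / mob l1 l2 with hc
    have hcle : ‖c‖ ≤ 1 := by
      rw [hc, norm_div, div_le_one (norm_pos_iff.2 hmlne)]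
      exact hK
    set g : ℂ → ℂ := fun z => c * mob l1 z with hgdef
    have hgabs : ∀ z : ℂ, ‖z‖ < 1 → ‖g z‖ < 1 := by
      intro z hz
      rw [hgdef]
      simp only [norm_mul]
      have := mob_abs_lt hl1 hz
      nlinarith [norm_nonneg c, norm_nonneg (mob l1 z)]
    refine ⟨fun z => mob (-w1) (g z), ?_, ?_, ?_, ?_⟩
    · rw [hset]
      have h1 : DifferentiableOn ℂ g (ball 0 1) := by
        apply DifferentiableOn.const_mul
        apply DifferentiableOn.div
        · fun_prop
        · fun_prop
        · intro z hz
          exact denom_ne hl1 (mem_ball_iff_abs.1 hz).le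
      apply DifferentiableOn.div
      · exact h1.sub (differentiableOn_const _)
      · exact (differentiableOn_const _).sub ((differentiableOn_const _).mul h1)
      · intro z hz
        exact denom_ne (by simpa using hw1) (hgabs z (mem_ball_iff_abs.1 hz)).le
    · intro z hz
      exact (mob_abs_lt (by simpa using hw1) (hgabs z hz)).le
    · show mob (-w1) (g l1) = w1
      have hgl : g l1 = 0 := by rw [hgdef]; simp [mob_self]
      rw [hgl]; simp [mob]
    · show mob (-w1) (g l2) = w2
      have hgl : g l2 = mob w1 w2 := by
        rw [hgdef, hc]; field_simp
      rw [hgl, mob_inv hw1 hw2]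
  · rintro ⟨f, hfd, hfb, hf1, hf2⟩
    rw [hset] at hfd
    exact schwarz_pick hfd (fun z hz => hfb z (mem_ball_iff_abs.1 hz)) hl1 hl2 hw1 hf1 hf2
end

section
/- Let λ₁ and λ₂ be two distinct points of 𝔻 and let ω₁, ω₂ ∈ 𝔻, and let P be the 2×2 Pick matrix with (i,j)-entry (1−ω_i·conj(ω_j))/(1−λ_i·conj(λ_j)). Then P is positive semi-definite if and only if its entrywise (Schur) square P⊙P, the matrix with (i,j)-entry (1−ω_i·conj(ω_j))²/(1−λ_i·conj(λ_j))², is positive semi-definite. -/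
open Complex ComplexConjugate ComplexOrder
open Matrix in

lemma quad_form (a d : ℝ) (b : ℂ) (x : Fin 2 → ℂ) :
    star x ⬝ᵥ (Matrix.of ![![(a:ℂ), b], ![conj b, (d:ℂ)]]) *ᵥ x =
      ((a * Complex.normSq (x 0) + d * Complex.normSq (x 1)
        + 2 * (b * conj (x 0) * x 1).re : ℝ) : ℂ) := by
  have h1 : x 0 * conj (x 0) = (Complex.normSq (x 0) : ℂ) := Complex.mul_conj (x 0)
  have h2 : x 1 * conj (x 1) = (Complex.normSq (x 1) : ℂ) := Complex.mul_conj (x 1)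
  have h3 : (b * conj (x 0) * x 1) + conj (b * conj (x 0) * x 1)
      = ((2 * (b * conj (x 0) * x 1).re : ℝ) : ℂ) := Complex.add_conj _
  simp only [dotProduct, Matrix.mulVec, Fin.sum_univ_two, Matrix.of_apply,
    Matrix.cons_val', Matrix.cons_val_zero, Matrix.cons_val_one, Matrix.head_cons,
    Matrix.empty_val', Matrix.cons_val_fin_one, Matrix.head_fin_const, Pi.star_apply,
    RCLike.star_def]
  simp only [_root_.map_mul, Complex.conj_conj] at h3 ⊢
  push_cast at h3 ⊢
  linear_combination (a:ℂ) * h1 + (d:ℂ) * h2 + h3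

lemma psd2 (a d : ℝ) (ha : 0 < a) (hd : 0 < d) (b : ℂ) :
    (Matrix.of ![![(a:ℂ), b], ![conj b, (d:ℂ)]]).PosSemidef ↔ Complex.normSq b ≤ a * d := by
  constructor
  · intro h
    have h0 := h.dotProduct_mulVec_nonneg ![-b, (a:ℂ)]
    rw [quad_form, Complex.zero_le_real] at h0
    simp only [Matrix.cons_val_zero, Matrix.cons_val_one, Matrix.head_cons, map_neg,
      Complex.normSq_neg, Complex.normSq_ofReal, mul_neg, Complex.mul_conj,
      Complex.neg_re, Complex.mul_re, Complex.ofReal_re, Complex.ofReal_im,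
      Complex.normSq_mk] at h0
    push_cast at h0
    nlinarith [Complex.normSq_nonneg b]
  · intro hb
    rw [Matrix.posSemidef_iff_dotProduct_mulVec]
    constructor
    · ext i j
      fin_cases i <;> fin_cases j <;>
        simp [Matrix.conjTranspose_apply, Complex.conj_ofReal]
    · intro x
      rw [quad_form, Complex.zero_le_real]
      have hn : Complex.normSq (b * conj (x 0) * x 1)
          = Complex.normSq b * Complex.normSq (x 0) * Complex.normSq (x 1) := by
        simp [Complex.normSq_conj]
      have hre : (b * conj (x 0) * x 1).re ^ 2
          ≤ Complex.normSq b * Complex.normSq (x 0) * Complex.normSq (x 1) := by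
        rw [← hn, Complex.normSq_apply]
        nlinarith [sq_nonneg (b * conj (x 0) * x 1).im]
      set u := Complex.normSq (x 0) with hu_def
      set v := Complex.normSq (x 1) with hv_def
      set r := (b * conj (x 0) * x 1).re with hr_def
      have hu : 0 ≤ u := Complex.normSq_nonneg _
      have hv : 0 ≤ v := Complex.normSq_nonneg _
      have h4 : r ^ 2 ≤ a * d * u * v := by nlinarith [mul_nonneg hu hv]
      rcases le_or_gt 0 r with hr | hr
      · nlinarith [mul_nonneg ha.le hu, mul_nonneg hd.le hv]
      · have h7 : (2 * (-r)) ^ 2 ≤ (a * u + d * v) ^ 2 := by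
          nlinarith [sq_nonneg (a * u - d * v)]
        have hs : 0 ≤ a * u + d * v := by positivity
        nlinarith [h7, hs, hr]

/-- A 2×2 Pick matrix is positive semi-definite iff its Schur (entrywise) square
is positive semi-definite. -/
theorem pick_posSemidef_iff_schur_square (l1 l2 w1 w2 : ℂ)
    (hl1 : ‖l1‖ < 1) (hl2 : ‖l2‖ < 1) (hne : l1 ≠ l2)
    (hw1 : ‖w1‖ < 1) (hw2 : ‖w2‖ < 1) :
    (Matrix.of fun i j : Fin 2 =>
        (1 - ![w1, w2] i * conj (![w1, w2] j)) /
          (1 - ![l1, l2] i * conj (![l1, l2] j))).PosSemidef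
      ↔ (Matrix.of fun i j : Fin 2 =>
          (1 - ![w1, w2] i * conj (![w1, w2] j)) ^ 2 /
            (1 - ![l1, l2] i * conj (![l1, l2] j)) ^ 2).PosSemidef := by
  have hL1 : 0 < 1 - Complex.normSq l1 := by
    rw [← Complex.sq_norm]; nlinarith [norm_nonneg l1]
  have hL2 : 0 < 1 - Complex.normSq l2 := by
    rw [← Complex.sq_norm]; nlinarith [norm_nonneg l2]
  have hW1 : 0 < 1 - Complex.normSq w1 := by
    rw [← Complex.sq_norm]; nlinarith [norm_nonneg w1]
  have hW2 : 0 < 1 - Complex.normSq w2 := by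
    rw [← Complex.sq_norm]; nlinarith [norm_nonneg w2]
  set a : ℝ := (1 - Complex.normSq w1) / (1 - Complex.normSq l1) with ha_def
  set d : ℝ := (1 - Complex.normSq w2) / (1 - Complex.normSq l2) with hd_def
  set b : ℂ := (1 - w1 * conj w2) / (1 - l1 * conj l2) with hb_def
  have ha : 0 < a := div_pos hW1 hL1
  have hd : 0 < d := div_pos hW2 hL2
  have hM : (Matrix.of fun i j : Fin 2 =>
        (1 - ![w1, w2] i * conj (![w1, w2] j)) /
          (1 - ![l1, l2] i * conj (![l1, l2] j)))
      = Matrix.of ![![(a:ℂ), b], ![conj b, (d:ℂ)]] := by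
    ext i j
    fin_cases i <;> fin_cases j <;>
      simp [ha_def, hd_def, hb_def, Complex.mul_conj, map_div₀, mul_comm] <;>
      push_cast <;> ring_nf
  have hM2 : (Matrix.of fun i j : Fin 2 =>
        (1 - ![w1, w2] i * conj (![w1, w2] j)) ^ 2 /
          (1 - ![l1, l2] i * conj (![l1, l2] j)) ^ 2)
      = Matrix.of ![![((a ^ 2 : ℝ) : ℂ), b ^ 2], ![conj (b ^ 2), ((d ^ 2 : ℝ) : ℂ)]] := by
    ext i j
    fin_cases i <;> fin_cases j <;>
      simp [ha_def, hd_def, hb_def, Complex.mul_conj, map_div₀, div_pow, map_pow, mul_comm] <;>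
      push_cast <;> ring_nf
  rw [hM, hM2, psd2 a d ha hd b, psd2 (a ^ 2) (d ^ 2) (pow_pos ha 2) (pow_pos hd 2) (b ^ 2)]
  rw [show Complex.normSq (b ^ 2) = Complex.normSq b ^ 2 from map_pow Complex.normSq b 2]
  constructor
  · intro h; nlinarith [Complex.normSq_nonneg b]
  · intro h; nlinarith [Complex.normSq_nonneg b, mul_pos ha hd]
end

section
/- For the interpolation data λ₁ = 2/3, λ₂ = 3/4, λ₃ = 0 and ω₁ = 1/3, ω₂ = 1/4, ω₃ = 0, the 3×3 Pick matrix P with (i,j)-entry (1−ω_i·conj(ω_j))/(1−λ_i·conj(λ_j)), which equals [[8/5, 11/6, 1], [11/6, 15/7, 1], [1, 1, 1]], is not positive semi-definite (its determinant is −11/1260 < 0), while its entrywise (Schur) square P⊙P = [[64/25, 121/36, 1], [121/36, 225/49, 1], [1, 1, 1]] is positive definite. -/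
open Complex ComplexConjugate ComplexOrder Matrix

lemma aux_posDef_conj {n : Type*} [Fintype n] [DecidableEq n]
    (B D : Matrix n n ℂ) (hD : D.PosDef) (hB : IsUnit B) : (Bᴴ * D * B).PosDef := by
  refine Matrix.PosDef.of_dotProduct_mulVec_pos ?_ fun x hx => ?_
  · simp only [Matrix.IsHermitian, Matrix.conjTranspose_mul,
      Matrix.conjTranspose_conjTranspose, hD.1.eq, Matrix.mul_assoc]
  · have hBx : B *ᵥ x ≠ 0 := fun h => hx <|
      Matrix.mulVec_injective_iff_isUnit.mpr hB (h.trans (Matrix.mulVec_zero B).symm)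
    have key : dotProduct (star x) ((Bᴴ * D * B) *ᵥ x)
        = dotProduct (star (B *ᵥ x)) (D *ᵥ (B *ᵥ x)) := by
      rw [← Matrix.mulVec_mulVec, ← Matrix.mulVec_mulVec, Matrix.dotProduct_mulVec,
        ← Matrix.star_mulVec]
    rw [key]
    exact hD.dotProduct_mulVec_pos hBx

/-- For the data `λ = (2/3, 3/4, 0)`, `ω = (1/3, 1/4, 0)`, the 3×3 Pick matrix
equals `[[8/5, 11/6, 1], [11/6, 15/7, 1], [1, 1, 1]]`, is not positive
semi-definite (its determinant is `−11/1260`), while its Schur (entrywise)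
square equals `[[64/25, 121/36, 1], [121/36, 225/49, 1], [1, 1, 1]]` and is
positive definite. -/
theorem pick_counterexample_three_points :
    let P : Matrix (Fin 3) (Fin 3) ℂ := Matrix.of fun i j : Fin 3 =>
      (1 - ![(1:ℂ)/3, 1/4, 0] i * conj (![(1:ℂ)/3, 1/4, 0] j)) /
        (1 - ![(2:ℂ)/3, 3/4, 0] i * conj (![(2:ℂ)/3, 3/4, 0] j))
    P = !![8/5, 11/6, 1; 11/6, 15/7, 1; 1, 1, 1] ∧
    ¬ P.PosSemidef ∧
    P.det = -11 / 1260 ∧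
    (Matrix.of fun i j : Fin 3 => (P i j) ^ 2)
      = !![64/25, 121/36, 1; 121/36, 225/49, 1; 1, 1, 1] ∧
    (Matrix.of fun i j : Fin 3 => (P i j) ^ 2).PosDef := by
  intro P
  have hP : P = !![8/5, 11/6, 1; 11/6, 15/7, 1; 1, 1, 1] := by
    ext i j
    fin_cases i <;> fin_cases j <;>
      simp [P, Matrix.of_apply, Matrix.vecHead, Matrix.vecTail, map_div₀, _root_.map_one,
        map_ofNat] <;> norm_num
  have hQ : (Matrix.of fun i j : Fin 3 => (P i j) ^ 2)
      = !![64/25, 121/36, 1; 121/36, 225/49, 1; 1, 1, 1] := by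
    rw [hP]
    ext i j
    fin_cases i <;> fin_cases j <;>
      simp [Matrix.vecHead, Matrix.vecTail] <;> norm_num
  refine ⟨hP, ?_, ?_, hQ, ?_⟩
  · intro hPS
    set v : Fin 3 → ℂ := ![-20, 13, 7] with hv
    have h := hPS.dotProduct_mulVec_nonneg v
    rw [hP] at h
    have hval : dotProduct (star v)
        ((!![8/5, 11/6, 1; 11/6, 15/7, 1; 1, 1, 1] : Matrix (Fin 3) (Fin 3) ℂ) *ᵥ v)
        = -4/21 := by
      simp [hv, dotProduct, Matrix.mulVec, Fin.sum_univ_three, Matrix.vecHead,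
        Matrix.vecTail, map_ofNat]
      norm_num
    rw [hval] at h
    have : ¬ ((0:ℂ) ≤ -4/21) := by
      rw [Complex.le_def]
      norm_num
    exact this h
  · rw [hP, Matrix.det_fin_three]
    norm_num [Matrix.vecHead, Matrix.vecTail, Matrix.cons_val_two]
  · rw [hQ]
    have hD : (Matrix.diagonal ![(64/25 : ℂ), 727175/4064256, 45119/727175]).PosDef := by
      refine Matrix.PosDef.diagonal fun i => ?_
      fin_cases i <;> · rw [Complex.lt_def]; norm_num
    set B : Matrix (Fin 3) (Fin 3) ℂ :=
      !![1, 3025/2304, 25/64; 0, 1, -1271844/727175; 0, 0, 1] with hB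
    have hBu : IsUnit B := by
      rw [Matrix.isUnit_iff_isUnit_det, hB, Matrix.det_fin_three]
      norm_num [Matrix.vecHead, Matrix.vecTail, Matrix.cons_val_two]
    have hfact : (!![64/25, 121/36, 1; 121/36, 225/49, 1; 1, 1, 1] : Matrix (Fin 3) (Fin 3) ℂ)
        = Bᴴ * (Matrix.diagonal ![(64/25 : ℂ), 727175/4064256, 45119/727175]) * B := by
      ext i j
      fin_cases i <;> fin_cases j <;>
        simp [hB, Matrix.mul_apply, Fin.sum_univ_three, Matrix.conjTranspose_apply,
          Matrix.diagonal, Matrix.vecHead, Matrix.vecTail, map_div₀, _root_.map_one, map_ofNat] <;>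
        norm_num
    rw [hfact]
    exact aux_posDef_conj B _ hD hBu
end
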